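/- arXiv:2405.10726 — 4 statements merged into one kernel-verified Lean document; each statement's English description precedes it below -/
import Mathlib

section
/- Let k have characteristic p > 0, let n be a positive integer, and let m = p^l·m' with l ≥ 1 and p not dividing m'. Let H be a subgroup of the symmetric group S_n whose order is not divisible by p, acting on (Z/mZ)^n by permuting coordinates, and set G := (Z/mZ)^n ⋊ H. Let R be a p-hyperfocal subgroup of G and let C_{(Z/mZ)^n}(H) be the centralizer of H in (Z/mZ)^n (the set of vectors fixed by the permutation action of every element of H). Then rank(R) + rank(C_{(Z/mZ)^n}(H)) = n. -/
universe u

/-- The action of permutations on tuples by permuting the entries: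
`(σ • v) i = v (σ⁻¹ i)`. -/
def permMulAut (n : ℕ) (A : Type u) [CommGroup A] :
    Equiv.Perm (Fin n) →* MulAut (Fin n → A) where
  toFun σ :=
    { toFun := fun v => v ∘ σ.symm
      invFun := fun v => v ∘ σ
      left_inv := fun v => by ext i; simp
      right_inv := fun v => by ext i; simp
      map_mul' := fun v w => rfl }
  map_one' := by ext v i; rfl
  map_mul' := fun σ τ => by
    ext v i
    show v ((σ * τ).symm i) = v (τ.symm (σ.symm i))
    rfl

/-- The semidirect product `(ℤ/mℤ)^n ⋊ H` where `H ≤ S_n` permutes the coordinates. -/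
abbrev PermSdp (m n : ℕ) (H : Subgroup (Equiv.Perm (Fin n))) : Type :=
  (Fin n → Multiplicative (ZMod m)) ⋊[(permMulAut n (Multiplicative (ZMod m))).comp H.subtype] ↥H

/-- The centralizer of `H` in `(ℤ/mℤ)^n`: the subgroup of vectors fixed by the
permutation action of every element of `H`. -/
def fixedVectors (m n : ℕ) (H : Subgroup (Equiv.Perm (Fin n))) :
    Subgroup (Fin n → Multiplicative (ZMod m)) where
  carrier := {v | ∀ σ ∈ H, permMulAut n (Multiplicative (ZMod m)) σ v = v}
  one_mem' := fun σ _ => map_one _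
  mul_mem' := fun {a b} ha hb σ hσ => by rw [map_mul, ha σ hσ, hb σ hσ]
  inv_mem' := fun {a} ha σ hσ => by rw [map_inv, ha σ hσ]

/-- The rank of a group: the minimal cardinality of a generating set. -/
noncomputable def grpRank (G : Type u) [Group G] : ℕ :=
  sInf {c : ℕ | ∃ s : Finset G, s.card = c ∧ Subgroup.closure (s : Set G) = ⊤}

section OrbitSetup

variable {n : ℕ} (H : Subgroup (Equiv.Perm (Fin n)))

def orbSetoid : Setoid (Fin n) where
  r i j := ∃ σ ∈ H, σ i = j
  iseqv := by
    refine ⟨fun i => ⟨1, H.one_mem, rfl⟩, ?_, ?_⟩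
    · rintro i j ⟨σ, hσ, rfl⟩
      exact ⟨σ⁻¹, H.inv_mem hσ, by simp⟩
    · rintro i j k ⟨σ, hσ, rfl⟩ ⟨τ, hτ, rfl⟩
      exact ⟨τ * σ, H.mul_mem hτ hσ, rfl⟩

noncomputable def rep (i : Fin n) : Fin n := (Quotient.mk (orbSetoid H) i).out

lemma rep_rel (i : Fin n) : ∃ σ ∈ H, σ (rep H i) = i := Quotient.mk_out (s := orbSetoid H) i

lemma rep_eq_of_rel {i j : Fin n} (σ : Equiv.Perm (Fin n)) (hσ : σ ∈ H) (h : σ i = j) :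
    rep H i = rep H j := by
  unfold rep
  congr 1
  exact Quotient.sound ⟨σ, hσ, h⟩

lemma rep_rep (i : Fin n) : rep H (rep H i) = rep H i := by
  obtain ⟨σ, hσ, h⟩ := rep_rel H i
  exact rep_eq_of_rel H σ hσ h

lemma rep_apply {σ : Equiv.Perm (Fin n)} (hσ : σ ∈ H) (i : Fin n) : rep H (σ i) = rep H i :=
  (rep_eq_of_rel H σ hσ rfl).symm

/-- The fixed points of `rep` are in bijection with the orbits. -/
noncomputable def repFixedEquiv : {i : Fin n // rep H i = i} ≃ Quotient (orbSetoid H) where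
  toFun i := Quotient.mk _ i.1
  invFun ω := ⟨ω.out, by unfold rep; congr 1; exact Quotient.out_eq ω⟩
  left_inv i := Subtype.ext i.2
  right_inv ω := Quotient.out_eq ω

end OrbitSetup

section ClassProd

variable {m n : ℕ} (H : Subgroup (Equiv.Perm (Fin n)))

/-- Product of the entries of `v` over the orbit whose representative is `c`. -/
noncomputable def classProd (v : Fin n → Multiplicative (ZMod m)) (c : Fin n) :
    Multiplicative (ZMod m) :=
  ∏ j ∈ Finset.univ.filter (fun j => rep H j = c), v j

lemma classProd_one (c : Fin n) : classProd H (1 : Fin n → Multiplicative (ZMod m)) c = 1 :=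
  Finset.prod_const_one

lemma classProd_mul (v w : Fin n → Multiplicative (ZMod m)) (c : Fin n) :
    classProd H (v * w) c = classProd H v c * classProd H w c :=
  Finset.prod_mul_distrib

lemma classProd_inv (v : Fin n → Multiplicative (ZMod m)) (c : Fin n) :
    classProd H v⁻¹ c = (classProd H v c)⁻¹ := by
  unfold classProd
  rw [← Finset.prod_inv_distrib]
  rfl

lemma classProd_pow (v : Fin n → Multiplicative (ZMod m)) (c : Fin n) (k : ℕ) :
    classProd H (v ^ k) c = (classProd H v c) ^ k := by
  unfold classProd
  rw [← Finset.prod_pow]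
  rfl

lemma classProd_perm (v : Fin n → Multiplicative (ZMod m)) {σ : Equiv.Perm (Fin n)}
    (hσ : σ ∈ H) (c : Fin n) : classProd H (v ∘ σ.symm) c = classProd H v c := by
  unfold classProd
  refine Finset.prod_nbij (fun j => σ.symm j) ?_ ?_ ?_ ?_
  · intro j hj
    simp only [Finset.mem_filter, Finset.mem_univ, true_and] at hj ⊢
    rw [← hj]
    exact (rep_apply H (H.inv_mem hσ) j)
  · intro a _ b _ hab
    exact σ.symm.injective hab
  · intro j hj
    simp only [Finset.coe_filter, Finset.mem_univ, true_and, Set.mem_image,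
      Set.mem_setOf_eq] at hj ⊢
    exact ⟨σ j, by rwa [rep_apply H hσ], σ.symm_apply_apply j⟩
  · intro j _
    rfl

lemma classProd_mulSingle (a : Multiplicative (ZMod m)) (j c : Fin n) :
    classProd H (Pi.mulSingle j a) c = if rep H j = c then a else 1 := by
  unfold classProd
  have h : ∀ x ∈ Finset.univ.filter (fun j' => rep H j' = c), (Pi.mulSingle j a : Fin n → Multiplicative (ZMod m)) x
      = if x = j then a else 1 := fun x _ => Pi.mulSingle_apply j a x
  rw [Finset.prod_congr rfl h, Finset.prod_ite_eq' (Finset.univ.filter (fun j' => rep H j' = c))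
    j (fun _ => a)]
  simp

lemma classProd_empty {c : Fin n} (hc : rep H c ≠ c) (v : Fin n → Multiplicative (ZMod m)) :
    classProd H v c = 1 := by
  unfold classProd
  rw [Finset.filter_false_of_mem, Finset.prod_empty]
  intro j _
  intro h
  exact hc (by rw [← h, rep_rep])

/-- The product of single-vectors concentrated at the representatives computes classProds. -/
lemma prod_mulSingle_rep (v : Fin n → Multiplicative (ZMod m)) (c : Fin n) :
    ((∏ i, Pi.mulSingle (rep H i) (v i)) : Fin n → Multiplicative (ZMod m)) c
      = classProd H v c := by
  classical
  rw [Finset.prod_apply]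
  unfold classProd
  rw [← Finset.prod_filter_mul_prod_filter_not (Finset.univ : Finset (Fin n))
    (fun i => rep H i = c)
    (fun i => (Pi.mulSingle (rep H i) (v i) : Fin n → Multiplicative (ZMod m)) c)]
  have h1 : ∀ i ∈ Finset.univ.filter (fun i => rep H i = c),
      (Pi.mulSingle (rep H i) (v i) : Fin n → Multiplicative (ZMod m)) c = v i := by
    intro i hi
    simp only [Finset.mem_filter, Finset.mem_univ, true_and] at hi
    rw [hi, Pi.mulSingle_eq_same]
  have h2 : ∀ i ∈ Finset.univ.filter (fun i => ¬ rep H i = c),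
      (Pi.mulSingle (rep H i) (v i) : Fin n → Multiplicative (ZMod m)) c = 1 := by
    intro i hi
    simp only [Finset.mem_filter, Finset.mem_univ, true_and] at hi
    exact Pi.mulSingle_eq_of_ne (M := fun _ => Multiplicative (ZMod m))
      (fun h => hi h.symm) (v i)
  rw [Finset.prod_congr rfl h1, Finset.prod_congr rfl h2, Finset.prod_const_one, mul_one]

end ClassProd

section RankLemmas

lemma grpRank_mem_of_mulEquiv {G : Type u} {G' : Type u} [Group G] [Group G'] (e : G ≃* G')
    {c : ℕ} (h : ∃ s : Finset G, s.card = c ∧ Subgroup.closure (s : Set G) = ⊤) :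
    ∃ s : Finset G', s.card = c ∧ Subgroup.closure (s : Set G') = ⊤ := by
  classical
  obtain ⟨s, hcard, hclos⟩ := h
  refine ⟨s.image e, by rw [Finset.card_image_of_injective _ e.injective, hcard], ?_⟩
  rw [Finset.coe_image]
  have h3 := MonoidHom.map_closure (e : G →* G') (s : Set G)
  rw [hclos, Subgroup.map_top_of_surjective _ e.surjective] at h3
  exact h3.symm

lemma grpRank_congr {G : Type u} {G' : Type u} [Group G] [Group G'] (e : G ≃* G') :
    grpRank G = grpRank G' := by
  unfold grpRank
  congr 1
  ext c
  exact ⟨grpRank_mem_of_mulEquiv e, grpRank_mem_of_mulEquiv e.symm⟩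

lemma grpRank_pi_zmod {ι : Type} [Fintype ι] [DecidableEq ι] {N q : ℕ} (hq : q.Prime)
    (hd : q ∣ N) (hN : 1 < N) :
    grpRank (ι → Multiplicative (ZMod N)) = Fintype.card ι := by
  classical
  haveI : NeZero N := ⟨by omega⟩
  haveI : NeZero q := ⟨hq.ne_zero⟩
  haveI : Fact q.Prime := ⟨hq⟩
  have hone : (Multiplicative.ofAdd (1 : ZMod N)) ≠ 1 := by
    intro h
    have h1 : (1 : ZMod N) = 0 := h
    rw [show ((1 : ZMod N)) = ((1 : ℕ) : ZMod N) by simp] at h1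
    have := Nat.le_of_dvd one_pos ((ZMod.natCast_eq_zero_iff 1 N).mp h1)
    omega
  -- the generating set of single vectors
  set s₀ : Finset (ι → Multiplicative (ZMod N)) :=
    Finset.univ.image (fun i => Pi.mulSingle i (Multiplicative.ofAdd (1 : ZMod N))) with hs₀
  have hcard₀ : s₀.card = Fintype.card ι := by
    rw [hs₀, Finset.card_image_of_injective, Finset.card_univ]
    intro i j hij
    by_contra hne
    have h2 := congrFun hij i
    simp only [Pi.mulSingle_eq_same] at h2
    rw [Pi.mulSingle_eq_of_ne (M := fun _ => Multiplicative (ZMod N)) hne] at h2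
    exact hone h2
  have hclos₀ : Subgroup.closure (s₀ : Set (ι → Multiplicative (ZMod N))) = ⊤ := by
    rw [eq_top_iff]
    intro v _
    rw [← Finset.univ_prod_mulSingle v]
    refine Subgroup.prod_mem _ (fun i _ => ?_)
    have hv : v i = (Multiplicative.ofAdd (1 : ZMod N)) ^ (Multiplicative.toAdd (v i)).val := by
      rw [← ofAdd_nsmul]
      rw [← ofAdd_toAdd (v i)]
      congr 1
      rw [nsmul_eq_mul, mul_one]
      exact (ZMod.natCast_rightInverse _).symm
    rw [hv, Pi.mulSingle_pow (f := fun _ => Multiplicative (ZMod N))]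
    exact Subgroup.pow_mem _ (Subgroup.subset_closure (by
      rw [hs₀]
      exact Finset.mem_image_of_mem _ (Finset.mem_univ i))) _
  have hmem₀ : Fintype.card ι ∈
      {c : ℕ | ∃ s : Finset (ι → Multiplicative (ZMod N)),
        s.card = c ∧ Subgroup.closure (s : Set (ι → Multiplicative (ZMod N))) = ⊤} :=
    ⟨s₀, hcard₀, hclos₀⟩
  -- lower bound
  have hlow : ∀ s : Finset (ι → Multiplicative (ZMod N)),
      Subgroup.closure (s : Set (ι → Multiplicative (ZMod N))) = ⊤ →
      Fintype.card ι ≤ s.card := by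
    intro s hs
    set gmap : (ι → Multiplicative (ZMod N)) → (ι → ZMod q) :=
      fun v i => ZMod.castHom hd (ZMod q) (Multiplicative.toAdd (v i)) with hgmap
    set t : Finset (ι → ZMod q) := s.image gmap with ht
    set W : Submodule (ZMod q) (ι → ZMod q) := Submodule.span (ZMod q) (t : Set (ι → ZMod q))
      with hW
    have hWtop : W = ⊤ := by
      set T : Subgroup (ι → Multiplicative (ZMod N)) :=
        { carrier := {v | gmap v ∈ W}
          one_mem' := by
            have h0 : gmap 1 = 0 := by
              funext i
              exact map_zero (ZMod.castHom hd (ZMod q))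
            simp only [Set.mem_setOf_eq, h0]
            exact W.zero_mem
          mul_mem' := by
            intro a b ha hb
            have h0 : gmap (a * b) = gmap a + gmap b := by
              funext i
              exact map_add (ZMod.castHom hd (ZMod q)) _ _
            simp only [Set.mem_setOf_eq, h0] at *
            exact W.add_mem ha hb
          inv_mem' := by
            intro a ha
            have h0 : gmap a⁻¹ = - gmap a := by
              funext i
              exact map_neg (ZMod.castHom hd (ZMod q)) _
            simp only [Set.mem_setOf_eq, h0] at *
            exact W.neg_mem ha } with hT
      have hTtop : T = ⊤ := by
        rw [eq_top_iff, ← hs]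
        refine Subgroup.closure_le T |>.mpr ?_
        intro v hv
        exact Submodule.subset_span (by
          rw [ht, Finset.coe_image]
          exact Set.mem_image_of_mem _ hv)
      have hsurj : Function.Surjective gmap := by
        intro w
        refine ⟨fun i => Multiplicative.ofAdd (((w i).val : ℕ) : ZMod N), ?_⟩
        funext i
        show (ZMod.castHom hd (ZMod q)) (((w i).val : ℕ) : ZMod N) = w i
        rw [map_natCast]
        exact ZMod.natCast_rightInverse _
      rw [eq_top_iff]
      intro w _
      obtain ⟨v, rfl⟩ := hsurj w
      have : v ∈ T := hTtop ▸ Subgroup.mem_top v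
      exact this
    have h1 : Module.finrank (ZMod q) (ι → ZMod q) ≤ t.card := by
      calc Module.finrank (ZMod q) (ι → ZMod q)
          = Module.finrank (ZMod q) (⊤ : Submodule (ZMod q) (ι → ZMod q)) :=
            (finrank_top _ _).symm
        _ = Module.finrank (ZMod q) W := by rw [hWtop]
        _ ≤ (t : Set (ι → ZMod q)).toFinset.card := finrank_span_le_card _
        _ = t.card := by rw [Finset.toFinset_coe]
    rw [Module.finrank_fintype_fun_eq_card] at h1
    exact h1.trans (Finset.card_image_le)
  refine le_antisymm (Nat.sInf_le hmem₀) (le_csInf ⟨_, hmem₀⟩ ?_)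
  rintro c ⟨s, rfl, hs⟩
  exact hlow s hs

end RankLemmas

section Chi

variable (p l m' : ℕ)

/-- The embedding `ℤ/p^l → ℤ/(p^l m')`, `1 ↦ m'`. -/
noncomputable def chi0 : ZMod (p ^ l) →+ ZMod (p ^ l * m') :=
  ZMod.lift (p ^ l) ⟨zmultiplesHom (ZMod (p ^ l * m')) ((m' : ZMod (p ^ l * m'))), by
    show ((p ^ l : ℕ) : ℤ) • ((m' : ZMod (p ^ l * m'))) = 0
    rw [natCast_zsmul, nsmul_eq_mul, ← Nat.cast_mul, ZMod.natCast_self]⟩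

lemma chi0_natCast (j : ℕ) :
    chi0 p l m' ((j : ZMod (p ^ l))) = ((j * m' : ℕ) : ZMod (p ^ l * m')) := by
  have : ((j : ZMod (p ^ l))) = ((j : ℤ) : ZMod (p ^ l)) := by push_cast; rfl
  rw [this]
  unfold chi0
  rw [ZMod.lift_coe]
  show ((j : ℕ) : ℤ) • ((m' : ZMod (p ^ l * m'))) = _
  rw [natCast_zsmul, nsmul_eq_mul, ← Nat.cast_mul]

variable {p l m'} (hp : 0 < p) (hm' : 0 < m')

include hp hm' in
lemma chi0_injective : Function.Injective (chi0 p l m') := by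
  haveI : NeZero (p ^ l) := ⟨(Nat.pow_pos (n := l) hp).ne'⟩
  intro x y hxy
  have hx : x = ((x.val : ℕ) : ZMod (p ^ l)) := (ZMod.natCast_rightInverse x).symm
  have hy : y = ((y.val : ℕ) : ZMod (p ^ l)) := (ZMod.natCast_rightInverse y).symm
  rw [hx, hy, chi0_natCast, chi0_natCast] at hxy
  have h1 : x.val * m' ≡ y.val * m' [MOD p ^ l * m'] :=
    (ZMod.natCast_eq_natCast_iff _ _ _).mp hxy
  have h2 : x.val ≡ y.val [MOD p ^ l] := Nat.ModEq.mul_right_cancel' hm'.ne' h1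
  have h3 : x.val = y.val := by
    have hxlt := ZMod.val_lt x
    have hylt := ZMod.val_lt y
    unfold Nat.ModEq at h2
    rwa [Nat.mod_eq_of_lt hxlt, Nat.mod_eq_of_lt hylt] at h2
  rw [hx, hy, h3]

include hp hm' in
lemma chi0_torsion (x : ZMod (p ^ l)) : (p ^ l) • chi0 p l m' x = 0 := by
  rw [← map_nsmul]
  have : (p ^ l) • x = 0 := by
    rw [nsmul_eq_mul, ZMod.natCast_self, zero_mul]
  rw [this, map_zero]

include hp hm' in
lemma chi0_surj_torsion {y : ZMod (p ^ l * m')} (hy : (p ^ l) • y = 0) :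
    ∃ x, chi0 p l m' x = y := by
  haveI : NeZero (p ^ l * m') := ⟨Nat.mul_ne_zero (Nat.pow_pos (n := l) hp).ne' hm'.ne'⟩
  have hyv : y = ((y.val : ℕ) : ZMod (p ^ l * m')) := (ZMod.natCast_rightInverse y).symm
  have h2 : ((p ^ l * y.val : ℕ) : ZMod (p ^ l * m')) = 0 := by
    rw [Nat.cast_mul, ← nsmul_eq_mul,
      show ((y.val : ℕ) : ZMod (p ^ l * m')) = y from ZMod.natCast_rightInverse y]
    exact hy
  have hdvd : (p ^ l * m' : ℕ) ∣ p ^ l * y.val := (ZMod.natCast_eq_zero_iff _ _).mp h2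
  have hm'dvd : m' ∣ y.val := by
    have hppos : 0 < p ^ l := Nat.pow_pos (n := l) hp
    exact (Nat.mul_dvd_mul_iff_left hppos).mp hdvd
  obtain ⟨q, hq⟩ := hm'dvd
  refine ⟨(q : ZMod (p ^ l)), ?_⟩
  rw [chi0_natCast, hyv, hq]
  congr 1
  ring

end Chi

section GSetup

variable {m n : ℕ} {H : Subgroup (Equiv.Perm (Fin n))}

lemma phi_apply (σ : ↥H) (v : Fin n → Multiplicative (ZMod m)) :
    ((permMulAut n (Multiplicative (ZMod m))).comp H.subtype) σ v = v ∘ (σ : Equiv.Perm (Fin n)).symm :=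
  rfl

lemma classProd_phi (σ : ↥H) (v : Fin n → Multiplicative (ZMod m)) (c : Fin n) :
    classProd H (((permMulAut n (Multiplicative (ZMod m))).comp H.subtype) σ v) c
      = classProd H v c := by
  rw [phi_apply]
  exact classProd_perm H v σ.2 c

lemma phi_mulSingle (σ : ↥H) (i : Fin n) (a : Multiplicative (ZMod m)) :
    ((permMulAut n (Multiplicative (ZMod m))).comp H.subtype) σ (Pi.mulSingle i a)
      = Pi.mulSingle ((σ : Equiv.Perm (Fin n)) i) a := by
  rw [phi_apply]
  funext j
  show (Pi.mulSingle i a : Fin n → Multiplicative (ZMod m)) ((σ : Equiv.Perm (Fin n)).symm j) = _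
  rw [Pi.mulSingle_apply, Pi.mulSingle_apply]
  congr 1
  simp only [eq_iff_iff]
  exact ⟨fun h => by rw [← h]; simp, fun h => by rw [h]; simp⟩

lemma pow_right (g : PermSdp m n H) (j : ℕ) : (g ^ j).right = g.right ^ j := by
  induction j with
  | zero => rfl
  | succ j ih => rw [pow_succ, pow_succ, SemidirectProduct.mul_right, ih]

lemma pow_left_of_right_one (g : PermSdp m n H) (hg : g.right = 1) (j : ℕ) :
    (g ^ j).left = g.left ^ j := by
  induction j with
  | zero => rw [pow_zero, pow_zero]; rfl
  | succ j ih =>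
    rw [pow_succ, pow_succ, SemidirectProduct.mul_left, ih, pow_right, hg, one_pow, map_one]
    rfl

/-- The "class product" homomorphism `G → (ℤ/m)^n`. -/
noncomputable def clHom : PermSdp m n H →* (Fin n → Multiplicative (ZMod m)) where
  toFun g := fun c => classProd H g.left c
  map_one' := by funext c; exact classProd_one H c
  map_mul' a b := by
    funext c
    show classProd H ((a * b).left) c = _
    rw [SemidirectProduct.mul_left, classProd_mul, classProd_phi]
    rfl

lemma clHom_apply (g : PermSdp m n H) (c : Fin n) : clHom g c = classProd H g.left c := rfl

/-- The subgroup of vectors killed by `k`. -/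
def torsSub (m n k : ℕ) : Subgroup (Fin n → Multiplicative (ZMod m)) where
  carrier := {v | v ^ k = 1}
  one_mem' := one_pow k
  mul_mem' := by
    intro a b ha hb
    simp only [Set.mem_setOf_eq] at *
    rw [mul_pow, ha, hb, mul_one]
  inv_mem' := by
    intro a ha
    simp only [Set.mem_setOf_eq] at *
    rw [inv_pow, ha, inv_one]

lemma mem_torsSub {k : ℕ} {v : Fin n → Multiplicative (ZMod m)} :
    v ∈ torsSub m n k ↔ v ^ k = 1 := Iff.rfl

/-- `N = O^p(G)` as an explicit subgroup: elements whose class products are `m'`-torsion. -/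
noncomputable def nSub (m n m' : ℕ) (H : Subgroup (Equiv.Perm (Fin n))) :
    Subgroup (PermSdp m n H) :=
  (torsSub m n m').comap clHom

lemma mem_nSub {m' : ℕ} {g : PermSdp m n H} :
    g ∈ nSub m n m' H ↔ ∀ c, (classProd H g.left c) ^ m' = 1 := by
  change clHom g ∈ torsSub m n m' ↔ _
  rw [mem_torsSub]
  constructor
  · intro h c
    exact congrFun h c
  · intro h
    funext c
    exact h c

instance nSub_normal {m' : ℕ} : (nSub m n m' H).Normal := by
  constructor
  intro g hg h
  rw [mem_nSub] at hg ⊢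
  intro c
  have h1 : clHom (h * g * h⁻¹) = clHom g := by
    rw [map_mul, map_mul, map_inv]
    exact mul_inv_cancel_comm _ _
  have h2 : classProd H ((h * g * h⁻¹).left) c = classProd H g.left c := congrFun h1 c
  rw [h2]
  exact hg c

lemma pow_card_vec (v : Fin n → Multiplicative (ZMod m)) : v ^ m = 1 := by
  funext i
  show (v i) ^ m = 1
  show Multiplicative.ofAdd (m • Multiplicative.toAdd (v i)) = 1
  rw [nsmul_eq_mul, ZMod.natCast_self, zero_mul]
  rfl

end GSetup

section Sylow

variable {p l m' n : ℕ} {H : Subgroup (Equiv.Perm (Fin n))}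

/-- The `p`-torsion part of the base, which is the unique Sylow `p`-subgroup. -/
def pSub (m n p l : ℕ) (H : Subgroup (Equiv.Perm (Fin n))) : Subgroup (PermSdp m n H) where
  carrier := {g | g.right = 1 ∧ g.left ^ (p ^ l) = 1}
  one_mem' := ⟨rfl, one_pow _⟩
  mul_mem' := by
    rintro a b ⟨ha1, ha2⟩ ⟨hb1, hb2⟩
    refine ⟨by rw [SemidirectProduct.mul_right, ha1, hb1, mul_one], ?_⟩
    rw [SemidirectProduct.mul_left, ha1, map_one]
    show (a.left * b.left) ^ p ^ l = 1
    rw [mul_pow, ha2, hb2, mul_one]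
  inv_mem' := by
    rintro a ⟨ha1, ha2⟩
    refine ⟨by rw [SemidirectProduct.inv_right, ha1, inv_one], ?_⟩
    rw [SemidirectProduct.inv_left, ha1, inv_one, map_one]
    show (a.left)⁻¹ ^ p ^ l = 1
    rw [inv_pow, ha2, inv_one]

lemma mem_pSub {g : PermSdp m n H} :
    g ∈ pSub m n p l H ↔ g.right = 1 ∧ g.left ^ (p ^ l) = 1 := Iff.rfl

lemma pSub_isPGroup (hp : p.Prime) : IsPGroup p (pSub m n p l H) := by
  intro g
  refine ⟨l, ?_⟩
  have h1 : ((g : PermSdp m n H) ^ (p ^ l)) = 1 := by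
    have hr := g.2.1
    have hl := g.2.2
    apply SemidirectProduct.ext
    · rw [pow_left_of_right_one _ hr, hl]
      rfl
    · rw [pow_right, hr, one_pow]
      rfl
  refine Subtype.ext ?_
  rw [SubmonoidClass.coe_pow, h1]
  rfl

lemma sylow_le_pSub (hp : p.Prime) (hH : ¬ p ∣ Nat.card ↥H) (hm : m = p ^ l * m')
    (hpm' : ¬ p ∣ m') (S : Sylow p (PermSdp m n H)) :
    (S : Subgroup (PermSdp m n H)) ≤ pSub m n p l H := by
  intro g hg
  obtain ⟨k, hk⟩ := S.isPGroup' ⟨g, hg⟩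
  have hk' : g ^ (p ^ k) = 1 := by
    have := congrArg (Subtype.val) hk
    push_cast at this
    exact this
  have hr : g.right = 1 := by
    have h1 : g.right ^ (p ^ k) = 1 := by
      rw [← pow_right, hk']
      rfl
    have h2 : orderOf g.right ∣ p ^ k := orderOf_dvd_of_pow_eq_one h1
    have h3 : orderOf g.right ∣ Nat.card ↥H := orderOf_dvd_natCard g.right
    have hco : Nat.Coprime (p ^ k) (Nat.card ↥H) :=
      Nat.Coprime.pow_left k ((hp.coprime_iff_not_dvd).mpr hH)
    have : orderOf g.right ∣ 1 := hco ▸ Nat.dvd_gcd h2 h3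
    rw [orderOf_eq_one_iff.mp (Nat.dvd_one.mp this)]
  refine ⟨hr, ?_⟩
  have hleft : g.left ^ (p ^ k) = 1 := by
    rw [← pow_left_of_right_one g hr, hk']
    rfl
  funext i
  show (g.left i) ^ (p ^ l) = 1
  have h1 : (g.left i) ^ (p ^ k) = 1 := by
    have := congrFun hleft i
    exact this
  have h2 : orderOf (g.left i) ∣ p ^ k := orderOf_dvd_of_pow_eq_one h1
  have h3 : (g.left i) ^ m = 1 := by
    show Multiplicative.ofAdd (m • Multiplicative.toAdd (g.left i)) = 1
    rw [nsmul_eq_mul, ZMod.natCast_self, zero_mul]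
    rfl
  have h4 : orderOf (g.left i) ∣ p ^ l * m' := by
    rw [← hm]
    exact orderOf_dvd_of_pow_eq_one h3
  obtain ⟨j, hjk, hj⟩ := (Nat.dvd_prime_pow hp).mp h2
  have h5 : Nat.Coprime (p ^ j) m' := Nat.Coprime.pow_left j ((hp.coprime_iff_not_dvd).mpr hpm')
  have h6 : (p ^ j : ℕ) ∣ p ^ l := (Nat.Coprime.dvd_of_dvd_mul_right h5) (hj ▸ h4)
  exact orderOf_dvd_iff_pow_eq_one.mp (hj ▸ h6)

lemma sylow_eq_pSub (hp : p.Prime) (hH : ¬ p ∣ Nat.card ↥H) (hm : m = p ^ l * m')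
    (hpm' : ¬ p ∣ m') (S : Sylow p (PermSdp m n H)) :
    (S : Subgroup (PermSdp m n H)) = pSub m n p l H :=
  (S.is_maximal' (pSub_isPGroup hp) (sylow_le_pSub hp hH hm hpm' S)).symm

end Sylow

section OpIdent

variable {p l m' n : ℕ} {H : Subgroup (Equiv.Perm (Fin n))}

/-- The quotient by `nSub` is a `p`-group. -/
lemma nSub_quot_isPGroup (hm : m = p ^ l * m') :
    IsPGroup p (PermSdp m n H ⧸ nSub m n m' H) := by
  intro x
  obtain ⟨g, rfl⟩ := QuotientGroup.mk_surjective x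
  refine ⟨l, ?_⟩
  rw [← QuotientGroup.mk_pow, QuotientGroup.eq_one_iff]
  rw [mem_nSub]
  intro c
  have h1 : classProd H ((g ^ (p ^ l)).left) c = (classProd H g.left c) ^ (p ^ l) := by
    have := congrFun (map_pow clHom g (p ^ l)) c
    rw [clHom_apply] at this
    rw [this]
    rfl
  rw [h1, ← pow_mul, ← hm]
  show Multiplicative.ofAdd (m • Multiplicative.toAdd (classProd H g.left c)) = 1
  rw [nsmul_eq_mul, ZMod.natCast_self, zero_mul]
  rfl

variable (O : Subgroup (PermSdp m n H)) [O.Normal]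

lemma mem_O_of_pow_coprime (hp : p.Prime) (hOq : IsPGroup p (PermSdp m n H ⧸ O))
    {x : PermSdp m n H} {d : ℕ} (hx : x ^ d = 1) (hd : ¬ p ∣ d) : x ∈ O := by
  set y : PermSdp m n H ⧸ O := QuotientGroup.mk x with hy
  obtain ⟨k, hk⟩ := hOq y
  have h1 : orderOf y ∣ p ^ k := orderOf_dvd_of_pow_eq_one hk
  have h2 : orderOf y ∣ d := orderOf_dvd_of_pow_eq_one (by
    rw [hy, ← QuotientGroup.mk_pow, hx]
    rfl)
  have hco : Nat.Coprime (p ^ k) d := Nat.Coprime.pow_left k ((hp.coprime_iff_not_dvd).mpr hd)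
  have h3 : orderOf y ∣ 1 := hco ▸ Nat.dvd_gcd h1 h2
  have h4 : y = 1 := orderOf_eq_one_iff.mp (Nat.dvd_one.mp h3)
  exact (QuotientGroup.eq_one_iff x).mp h4

lemma inr_mem_O (hp : p.Prime) (hH : ¬ p ∣ Nat.card ↥H)
    (hOq : IsPGroup p (PermSdp m n H ⧸ O)) (σ : ↥H) :
    (SemidirectProduct.inr σ : PermSdp m n H) ∈ O := by
  have hcard : 0 < Nat.card ↥H := Nat.card_pos
  refine mem_O_of_pow_coprime O hp hOq (x := SemidirectProduct.inr σ) (d := Nat.card ↥H) ?_ hH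
  rw [← map_pow]
  have : σ ^ (Nat.card ↥H) = 1 := orderOf_dvd_iff_pow_eq_one.mp (orderOf_dvd_natCard σ)
  rw [this, map_one]

lemma inl_mem_O_of_torsion (hp : p.Prime) (hpm' : ¬ p ∣ m')
    (hOq : IsPGroup p (PermSdp m n H ⧸ O)) {v : Fin n → Multiplicative (ZMod m)}
    (hv : v ^ m' = 1) : (SemidirectProduct.inl v : PermSdp m n H) ∈ O := by
  refine mem_O_of_pow_coprime O hp hOq (d := m') ?_ hpm'
  rw [← map_pow, hv, map_one]

lemma inl_comm_mem_O (hp : p.Prime) (hH : ¬ p ∣ Nat.card ↥H)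
    (hOq : IsPGroup p (PermSdp m n H ⧸ O)) (w : Fin n → Multiplicative (ZMod m)) (σ : ↥H) :
    (SemidirectProduct.inl
      (w * (((permMulAut n (Multiplicative (ZMod m))).comp H.subtype) σ w)⁻¹) :
      PermSdp m n H) ∈ O := by
  have hz : (SemidirectProduct.inr σ : PermSdp m n H) ∈ O := inr_mem_O O hp hH hOq σ
  have heq : (SemidirectProduct.inl
      (w * (((permMulAut n (Multiplicative (ZMod m))).comp H.subtype) σ w)⁻¹) :
      PermSdp m n H)
      = SemidirectProduct.inl w * SemidirectProduct.inr σ * (SemidirectProduct.inl w)⁻¹ *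
        (SemidirectProduct.inr σ)⁻¹ := by
    rw [map_mul, map_inv, SemidirectProduct.inl_aut]
    simp only [mul_inv_rev, map_inv, inv_inv, mul_assoc]
  rw [heq]
  have hconj : SemidirectProduct.inl w * SemidirectProduct.inr σ *
      (SemidirectProduct.inl w)⁻¹ ∈ O :=
    Subgroup.Normal.conj_mem ‹O.Normal› _ hz _
  exact O.mul_mem hconj (O.inv_mem hz)

lemma nSub_le_O (hp : p.Prime) (hH : ¬ p ∣ Nat.card ↥H) (hpm' : ¬ p ∣ m')
    (hOq : IsPGroup p (PermSdp m n H ⧸ O)) : nSub m n m' H ≤ O := by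
  intro g hg
  rw [mem_nSub] at hg
  set v := g.left with hv
  set c0 : Fin n → Multiplicative (ZMod m) := ∏ i, Pi.mulSingle (rep H i) (v i) with hc0
  -- choose permutations moving i to its representative
  have hch : ∀ i : Fin n, ∃ σ : ↥H, (σ : Equiv.Perm (Fin n)) i = rep H i := by
    intro i
    obtain ⟨σ, hσ, hs⟩ := rep_rel H i
    refine ⟨⟨σ⁻¹, H.inv_mem hσ⟩, ?_⟩
    show σ⁻¹ i = rep H i
    conv_lhs => rw [← hs]
    simp
  choose τ hτ using hch
  -- c0 is m'-torsion
  have hc0t : c0 ^ m' = 1 := by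
    funext j
    show (c0 j) ^ m' = 1
    have : c0 j = classProd H v j := prod_mulSingle_rep H v j
    rw [this]
    exact hg j
  have hc0O : (SemidirectProduct.inl c0 : PermSdp m n H) ∈ O :=
    inl_mem_O_of_torsion O hp hpm' hOq hc0t
  -- v * c0⁻¹ is a product of commutator-type elements
  have hdecomp : v * c0⁻¹ = ∏ i, (Pi.mulSingle i (v i) *
      ((((permMulAut n (Multiplicative (ZMod m))).comp H.subtype) (τ i))
        (Pi.mulSingle i (v i)))⁻¹) := by
    have hprod : (∏ i, ((((permMulAut n (Multiplicative (ZMod m))).comp H.subtype) (τ i))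
        (Pi.mulSingle i (v i)))) = c0 := by
      rw [hc0]
      exact Finset.prod_congr rfl (fun i _ => by rw [phi_mulSingle, hτ i])
    rw [Finset.prod_mul_distrib, Finset.univ_prod_mulSingle, Finset.prod_inv_distrib, hprod]
  have hvcO : (SemidirectProduct.inl (v * c0⁻¹) : PermSdp m n H) ∈ O := by
    have hmem : v * c0⁻¹ ∈ O.comap
        (SemidirectProduct.inl : (Fin n → Multiplicative (ZMod m)) →* PermSdp m n H) := by
      rw [hdecomp]
      refine Subgroup.prod_mem _ (fun i _ => ?_)
      rw [Subgroup.mem_comap]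
      exact inl_comm_mem_O O hp hH hOq (Pi.mulSingle i (v i)) (τ i)
    rwa [Subgroup.mem_comap] at hmem
  have hfin : g = SemidirectProduct.inl (v * c0⁻¹) * SemidirectProduct.inl c0 *
      SemidirectProduct.inr g.right := by
    rw [← map_mul, inv_mul_cancel_right]
    exact (SemidirectProduct.inl_left_mul_inr_right g).symm
  rw [hfin]
  exact O.mul_mem (O.mul_mem hvcO hc0O) (inr_mem_O O hp hH hOq g.right)

lemma O_eq_nSub (hp : p.Prime) (hH : ¬ p ∣ Nat.card ↥H) (hm : m = p ^ l * m')
    (hpm' : ¬ p ∣ m') (hOq : IsPGroup p (PermSdp m n H ⧸ O))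
    (hOmin : ∀ (N : Subgroup (PermSdp m n H)) [N.Normal],
      IsPGroup p (PermSdp m n H ⧸ N) → O ≤ N) :
    O = nSub m n m' H :=
  le_antisymm (hOmin _ (nSub_quot_isPGroup hm)) (nSub_le_O O hp hH hpm' hOq)

end OpIdent

section REquiv

variable {p l m' n : ℕ} {H : Subgroup (Equiv.Perm (Fin n))}

/-- Multiplicative version of `chi0`. -/
noncomputable def kap (p l m' : ℕ) :
    Multiplicative (ZMod (p ^ l)) →* Multiplicative (ZMod (p ^ l * m')) :=
  AddMonoidHom.toMultiplicative (chi0 p l m')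

noncomputable def psi (p l m' : ℕ) :
    Multiplicative (ZMod (p ^ l * m')) → Multiplicative (ZMod (p ^ l)) :=
  Function.invFun (kap p l m')

variable (hp : 0 < p) (hm' : 0 < m')

include hp hm' in
lemma kap_injective : Function.Injective (kap p l m') := by
  intro x y h
  exact chi0_injective hp hm' (h : chi0 p l m' (Multiplicative.toAdd x) = _)

include hp hm' in
lemma psi_kap (x : Multiplicative (ZMod (p ^ l))) : psi p l m' (kap p l m' x) = x :=
  Function.leftInverse_invFun (kap_injective hp hm') x

include hp hm' in
lemma kap_torsion (x : Multiplicative (ZMod (p ^ l))) : (kap p l m' x) ^ (p ^ l) = 1 := by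
  show Multiplicative.ofAdd ((p ^ l) • chi0 p l m' (Multiplicative.toAdd x)) = 1
  rw [chi0_torsion hp hm']
  rfl

include hp hm' in
lemma kap_surj_torsion {y : Multiplicative (ZMod (p ^ l * m'))} (hy : y ^ (p ^ l) = 1) :
    ∃ x, kap p l m' x = y := by
  have hy' : (p ^ l) • Multiplicative.toAdd y = 0 := hy
  obtain ⟨x, hx⟩ := chi0_surj_torsion hp hm' hy'
  exact ⟨Multiplicative.ofAdd x, by
    show Multiplicative.ofAdd (chi0 p l m' x) = y
    rw [hx]
    rfl⟩

/-- Key reindexing: products over non-representative indices of a class. -/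
lemma prod_delta {A : Type} [CommMonoid A] (F : Fin n → A) {c : Fin n} (hc : rep H c = c) :
    (∏ j : {i : Fin n // ¬ rep H i = i}, (if rep H j.1 = c then F j.1 else 1))
      = ∏ j ∈ (Finset.univ.filter (fun j => rep H j = c)).erase c, F j := by
  classical
  rw [← Finset.prod_filter]
  refine Finset.prod_nbij (fun j => j.1) ?_ ?_ ?_ ?_
  · intro j hj
    simp only [Finset.mem_filter, Finset.mem_univ, true_and] at hj
    simp only [Finset.mem_erase, Finset.mem_filter, Finset.mem_univ, true_and]
    refine ⟨?_, hj⟩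
    intro hjc
    apply j.2
    rw [hjc]
    exact hc
  · intro a _ b _ hab
    exact Subtype.ext hab
  · intro j hj
    simp only [Finset.coe_erase, Finset.coe_filter, Finset.mem_univ, true_and,
      Set.mem_diff, Set.mem_setOf_eq, Set.mem_singleton_iff] at hj
    have hjj : ¬ rep H j = j := fun h2 => hj.2 (by rw [← h2]; exact hj.1)
    exact ⟨⟨j, hjj⟩, by simp [hj.1], rfl⟩
  · intro j _
    rfl

/-- The extension of a vector on non-representatives to a class-product-one vector. -/
noncomputable def extVec (p l m' : ℕ) (H : Subgroup (Equiv.Perm (Fin n)))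
    (w : {i : Fin n // ¬ rep H i = i} → Multiplicative (ZMod (p ^ l)))
    (i : Fin n) : Multiplicative (ZMod (p ^ l * m')) :=
  if h : rep H i = i then
    (∏ j : {i : Fin n // ¬ rep H i = i}, (if rep H j.1 = i then kap p l m' (w j) else 1))⁻¹
  else kap p l m' (w ⟨i, h⟩)

include hp hm' in
lemma extVec_torsion (w : {i : Fin n // ¬ rep H i = i} → Multiplicative (ZMod (p ^ l)))
    (i : Fin n) : (extVec p l m' H w i) ^ (p ^ l) = 1 := by
  unfold extVec
  split_ifs with h
  · rw [inv_pow, ← Finset.prod_pow]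
    rw [Finset.prod_eq_one (fun j _ => ?_), inv_one]
    split_ifs with h2
    · exact kap_torsion hp hm' (w j)
    · exact one_pow _
  · exact kap_torsion hp hm' _

include hp hm' in
lemma extVec_classProd (w : {i : Fin n // ¬ rep H i = i} → Multiplicative (ZMod (p ^ l)))
    (c : Fin n) : classProd H (extVec p l m' H w) c = 1 := by
  by_cases hc : rep H c = c
  · have hcmem : c ∈ Finset.univ.filter (fun j => rep H j = c) := by
      simp [hc]
    unfold classProd
    rw [← Finset.mul_prod_erase _ _ hcmem]
    have h1 : extVec p l m' H w c =
        (∏ j : {i : Fin n // ¬ rep H i = i},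
          (if rep H j.1 = c then kap p l m' (w j) else 1))⁻¹ := by
      unfold extVec
      rw [dif_pos hc]
    have h2 : ∀ j ∈ (Finset.univ.filter (fun j => rep H j = c)).erase c,
        extVec p l m' H w j = (if h : rep H j = j then 1 else kap p l m' (w ⟨j, h⟩)) := by
      intro j hj
      rw [Finset.mem_erase, Finset.mem_filter] at hj
      have hjj : ¬ rep H j = j := by
        intro hjj
        exact hj.1 (by rw [← hjj, hj.2.2])
      unfold extVec
      rw [dif_neg hjj, dif_neg hjj]
    rw [h1, Finset.prod_congr rfl h2]
    have h3 : (∏ j : {i : Fin n // ¬ rep H i = i},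
        (if rep H j.1 = c then kap p l m' (w j) else 1))
        = ∏ j ∈ (Finset.univ.filter (fun j => rep H j = c)).erase c,
          (if h : rep H j = j then 1 else kap p l m' (w ⟨j, h⟩)) := by
      rw [← prod_delta (fun j => if h : rep H j = j then 1 else kap p l m' (w ⟨j, h⟩)) hc]
      refine Finset.prod_congr rfl (fun j _ => ?_)
      by_cases hr : rep H j.1 = c
      · rw [if_pos hr, if_pos hr, dif_neg j.2]
      · rw [if_neg hr, if_neg hr]
    rw [h3, inv_mul_cancel]
  · exact classProd_empty H hc _

include hp hm' in
lemma psi_mul_of_torsion {a b : Multiplicative (ZMod (p ^ l * m'))}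
    (ha : a ^ (p ^ l) = 1) (hb : b ^ (p ^ l) = 1) :
    psi p l m' (a * b) = psi p l m' a * psi p l m' b := by
  obtain ⟨x, rfl⟩ := kap_surj_torsion hp hm' ha
  obtain ⟨y, rfl⟩ := kap_surj_torsion hp hm' hb
  rw [← map_mul, psi_kap hp hm', psi_kap hp hm', psi_kap hp hm']

/-- The hyperfocal subgroup is isomorphic to a power of `ℤ/p^l`. -/
noncomputable def rEquiv (hp : 0 < p) (hm' : 0 < m')
    (R : Subgroup (PermSdp (p ^ l * m') n H))
    (hchar : ∀ g, g ∈ R ↔ g.right = 1 ∧ (∀ i, (g.left i) ^ (p ^ l) = 1) ∧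
      (∀ c, classProd H g.left c = 1)) :
    ↥R ≃* ({i : Fin n // ¬ rep H i = i} → Multiplicative (ZMod (p ^ l))) where
  toFun g i := psi p l m' ((g : PermSdp (p ^ l * m') n H).left i.1)
  invFun w := ⟨⟨extVec p l m' H w, 1⟩, by
    rw [hchar]
    exact ⟨rfl, extVec_torsion hp hm' w, extVec_classProd hp hm' w⟩⟩
  left_inv g := by
    apply Subtype.ext
    apply SemidirectProduct.ext
    · funext i
      show extVec p l m' H
          (fun j => psi p l m' ((g : PermSdp (p ^ l * m') n H).left j.1)) i
        = (g : PermSdp (p ^ l * m') n H).left i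
      have hg := (hchar _).mp g.2
      have htor : ∀ j, ((g : PermSdp (p ^ l * m') n H).left j) ^ (p ^ l) = 1 := hg.2.1
      have hkp : ∀ j : Fin n,
          kap p l m' (psi p l m' ((g : PermSdp (p ^ l * m') n H).left j))
            = (g : PermSdp (p ^ l * m') n H).left j := by
        intro j
        obtain ⟨x, hx⟩ := kap_surj_torsion hp hm' (htor j)
        rw [← hx, psi_kap hp hm']
      unfold extVec
      split_ifs with h
      · -- representative index: use the class-product-one relation
        have hcmem : i ∈ Finset.univ.filter (fun j => rep H j = i) := by simp [h]
        have hcp := hg.2.2 i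
        unfold classProd at hcp
        rw [← Finset.mul_prod_erase _ _ hcmem] at hcp
        have h3 : (∏ j : {i : Fin n // ¬ rep H i = i},
            (if rep H j.1 = i then kap p l m'
              (psi p l m' ((g : PermSdp (p ^ l * m') n H).left j.1)) else 1))
            = ∏ j ∈ (Finset.univ.filter (fun j => rep H j = i)).erase i,
              (g : PermSdp (p ^ l * m') n H).left j := by
          rw [← prod_delta ((g : PermSdp (p ^ l * m') n H).left) h]
          refine Finset.prod_congr rfl (fun j _ => ?_)
          by_cases hr : rep H j.1 = i
          · rw [if_pos hr, if_pos hr, hkp]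
          · rw [if_neg hr, if_neg hr]
        rw [h3]
        exact (eq_inv_of_mul_eq_one_left hcp).symm
      · exact hkp i
    · show (1 : ↥H) = _
      exact ((hchar _).mp g.2).1.symm
  right_inv w := by
    funext i
    show psi p l m' (extVec p l m' H w i.1) = w i
    unfold extVec
    rw [dif_neg i.2]
    rw [psi_kap hp hm']
  map_mul' g h := by
    funext i
    have hgr := ((hchar _).mp g.2).1
    have hgt := ((hchar _).mp g.2).2.1
    have hht := ((hchar _).mp h.2).2.1
    show psi p l m' (((g * h : ↥R) : PermSdp (p ^ l * m') n H).left i.1) = _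
    have hmul : ((g * h : ↥R) : PermSdp (p ^ l * m') n H).left i.1
        = (g : PermSdp (p ^ l * m') n H).left i.1
          * (h : PermSdp (p ^ l * m') n H).left i.1 := by
      have : ((g * h : ↥R) : PermSdp (p ^ l * m') n H)
          = (g : PermSdp (p ^ l * m') n H) * (h : PermSdp (p ^ l * m') n H) := rfl
      rw [this, SemidirectProduct.mul_left, hgr, map_one]
      rfl
    rw [hmul, psi_mul_of_torsion hp hm' (hgt i.1) (hht i.1)]
    rfl

end REquiv

section FixedAndCount

variable {m n : ℕ} {H : Subgroup (Equiv.Perm (Fin n))}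

lemma mem_fixedVectors_iff {v : Fin n → Multiplicative (ZMod m)} :
    v ∈ fixedVectors m n H ↔ ∀ i, v (rep H i) = v i := by
  constructor
  · intro hv i
    obtain ⟨σ, hσ, hs⟩ := rep_rel H i
    have h1 : σ.symm i = rep H i := by conv_lhs => rw [← hs]; simp
    have h2 := congrFun (hv σ hσ) i
    show v (rep H i) = v i
    rw [← h1]
    exact h2
  · intro hv σ hσ
    funext i
    show v (σ.symm i) = v i
    have h1 : rep H (σ.symm i) = rep H i := rep_apply H (H.inv_mem hσ) i
    rw [← hv (σ.symm i), h1, hv i]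

/-- The fixed vectors are exactly the vectors constant on orbits. -/
noncomputable def fixedEquiv :
    ↥(fixedVectors m n H) ≃* (Quotient (orbSetoid H) → Multiplicative (ZMod m)) where
  toFun v ω := v.1 ω.out
  invFun w := ⟨fun i => w (Quotient.mk _ i), by
    rw [mem_fixedVectors_iff]
    intro i
    show w (Quotient.mk _ (rep H i)) = w (Quotient.mk _ i)
    congr 1
    exact Quotient.sound (Quotient.mk_out (s := orbSetoid H) i)⟩
  left_inv v := by
    apply Subtype.ext
    funext i
    show v.1 ((Quotient.mk _ i).out) = v.1 i
    exact mem_fixedVectors_iff.mp v.2 i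
  right_inv w := by
    funext ω
    show w (Quotient.mk _ ω.out) = w ω
    congr 1
    exact Quotient.out_eq ω
  map_mul' v w := rfl

lemma card_split (H : Subgroup (Equiv.Perm (Fin n))) :
    Fintype.card {i : Fin n // ¬ rep H i = i} + Nat.card (Quotient (orbSetoid H)) = n := by
  haveI : Fintype (Quotient (orbSetoid H)) := Fintype.ofFinite _
  rw [Nat.card_eq_fintype_card, ← Fintype.card_congr (repFixedEquiv H)]
  have h1 := Fintype.card_subtype_compl (fun i : Fin n => rep H i = i)
  have hle : Fintype.card {i : Fin n // rep H i = i} ≤ Fintype.card (Fin n) :=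
    Fintype.card_subtype_le _
  rw [Fintype.card_fin] at h1 hle
  rw [h1]
  omega

end FixedAndCount

section Final

variable {p l m' n : ℕ} {H : Subgroup (Equiv.Perm (Fin n))}

lemma mem_R_char (hp : p.Prime) (hH : ¬ p ∣ Nat.card ↥H) (hpm' : ¬ p ∣ m')
    (O : Subgroup (PermSdp (p ^ l * m') n H)) [O.Normal]
    (hOq : IsPGroup p (PermSdp (p ^ l * m') n H ⧸ O))
    (hOmin : ∀ (N : Subgroup (PermSdp (p ^ l * m') n H)) [N.Normal],
      IsPGroup p (PermSdp (p ^ l * m') n H ⧸ N) → O ≤ N)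
    (S : Sylow p (PermSdp (p ^ l * m') n H)) (R : Subgroup (PermSdp (p ^ l * m') n H))
    (hR : R = (S : Subgroup (PermSdp (p ^ l * m') n H)) ⊓ O) :
    ∀ g, g ∈ R ↔ g.right = 1 ∧ (∀ i, (g.left i) ^ (p ^ l) = 1) ∧
      ∀ c, classProd H g.left c = 1 := by
  have hS := sylow_eq_pSub hp hH rfl hpm' S
  have hO := O_eq_nSub O hp hH rfl hpm' hOq hOmin
  intro g
  rw [hR, Subgroup.mem_inf, hS, hO, mem_pSub, mem_nSub]
  constructor
  · rintro ⟨⟨h1, h2⟩, h3⟩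
    refine ⟨h1, fun i => congrFun h2 i, fun c => ?_⟩
    have ha : (classProd H g.left c) ^ (p ^ l) = 1 := by
      rw [← classProd_pow, h2, classProd_one]
    have hb := h3 c
    have hco : Nat.Coprime (p ^ l) m' :=
      Nat.Coprime.pow_left l ((hp.coprime_iff_not_dvd).mpr hpm')
    have hd1 : orderOf (classProd H g.left c) ∣ p ^ l := orderOf_dvd_of_pow_eq_one ha
    have hd2 : orderOf (classProd H g.left c) ∣ m' := orderOf_dvd_of_pow_eq_one hb
    have hd3 : orderOf (classProd H g.left c) ∣ 1 := hco ▸ Nat.dvd_gcd hd1 hd2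
    exact orderOf_eq_one_iff.mp (Nat.dvd_one.mp hd3)
  · rintro ⟨h1, h2, h3⟩
    refine ⟨⟨h1, by funext i; exact h2 i⟩, fun c => by rw [h3 c, one_pow]⟩

/-- With `m = p^l * m'`, `l ≥ 1`, `p ∤ m'`, and `H ≤ S_n` a `p'`-subgroup
acting on `(ℤ/mℤ)^n` by permuting coordinates, let `R` be a `p`-hyperfocal subgroup of
`G = (ℤ/mℤ)^n ⋊ H`. Then `rank R + rank C_{(ℤ/mℤ)^n}(H) = n`. -/
theorem stmt2 {k : Type} [Field k] {p : ℕ} [Fact p.Prime] [CharP k p]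
    {n m l m' : ℕ} (hn : 0 < n) (hl : 1 ≤ l) (hm' : 0 < m') (hm : m = p ^ l * m')
    (hpm' : ¬ p ∣ m')
    (H : Subgroup (Equiv.Perm (Fin n))) (hH : ¬ p ∣ Nat.card ↥H)
    -- `O = O^p(G)`, the smallest normal subgroup with `p`-group quotient
    (O : Subgroup (PermSdp m n H)) [O.Normal] (hOq : IsPGroup p (PermSdp m n H ⧸ O))
    (hOmin : ∀ (N : Subgroup (PermSdp m n H)) [N.Normal], IsPGroup p (PermSdp m n H ⧸ N) → O ≤ N)
    -- `R = S ⊓ O` is a `p`-hyperfocal subgroup of `G`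
    (S : Sylow p (PermSdp m n H)) (R : Subgroup (PermSdp m n H))
    (hR : R = (S : Subgroup (PermSdp m n H)) ⊓ O) :
    grpRank ↥R + grpRank ↥(fixedVectors m n H) = n := by
  subst hm
  have hp : p.Prime := Fact.out
  have hchar := mem_R_char hp hH hpm' O hOq hOmin S R hR
  haveI : Fintype (Quotient (orbSetoid H)) := Fintype.ofFinite _
  haveI : DecidableEq (Quotient (orbSetoid H)) := Classical.decEq _
  have hppos : 0 < p := hp.pos
  have hplone : 1 < p ^ l := Nat.one_lt_pow (by omega) hp.one_lt
  have hrankR : grpRank ↥R = Fintype.card {i : Fin n // ¬ rep H i = i} := by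
    rw [grpRank_congr (rEquiv hppos hm' R hchar)]
    exact grpRank_pi_zmod hp (dvd_pow_self p (by omega)) hplone
  have hrankF : grpRank ↥(fixedVectors (p ^ l * m') n H)
      = Fintype.card (Quotient (orbSetoid H)) := by
    rw [grpRank_congr (fixedEquiv (m := p ^ l * m') (H := H))]
    rw [grpRank_pi_zmod hp (Dvd.dvd.mul_right (dvd_pow_self p (by omega)) m')
      (lt_of_lt_of_le hplone (Nat.le_mul_of_pos_right _ hm'))]
  rw [hrankR, hrankF]
  have := card_split H
  rwa [Nat.card_eq_fintype_card] at this

end Final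
end

section
/- Let k be a field and n a positive integer, and let I ⊆ k[x_1,…,x_n] be the ideal generated by the elementary symmetric polynomials E_1,…,E_n in x_1,…,x_n. Then for every 1 ≤ i ≤ n, the monomial (x_1^{n-1} x_2^{n-2} ⋯ x_i^{n-i}) · x_i = x_1^{n-1} ⋯ x_{i-1}^{n-i+1} · x_i^{n-i+1} belongs to I. -/
open scoped BigOperators

universe u

/-- The ideal of `k[x_1, …, x_n]` generated by the elementary symmetric polynomials
`E_1, …, E_n`. -/
noncomputable def coinvIdeal (k : Type u) [Field k] (n : ℕ) : Ideal (MvPolynomial (Fin n) k) :=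
  Ideal.span ((fun j => MvPolynomial.esymm (Fin n) k j) '' (Set.Icc 1 n))

namespace Stmt13Aux

open MvPolynomial Finset

section

variable {σ : Type*} {R : Type*} [CommRing R]

noncomputable def hh : ℕ → List σ → MvPolynomial σ R
  | 0, _ => 1
  | _ + 1, [] => 0
  | m + 1, a :: l => hh (m + 1) l + X a * hh m (a :: l)
termination_by m l => (m, l.length)

@[simp] lemma hh_zero (l : List σ) : (hh 0 l : MvPolynomial σ R) = 1 := by unfold hh; rfl
@[simp] lemma hh_nil_succ (m : ℕ) : (hh (m + 1) ([] : List σ) : MvPolynomial σ R) = 0 := by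
  unfold hh; rfl
lemma hh_cons (m : ℕ) (a : σ) (l : List σ) :
    (hh (m + 1) (a :: l) : MvPolynomial σ R) = hh (m + 1) l + X a * hh m (a :: l) := by rw [hh]

noncomputable def ee : ℕ → List σ → MvPolynomial σ R
  | 0, _ => 1
  | _ + 1, [] => 0
  | k + 1, a :: l => ee (k + 1) l + X a * ee k l

@[simp] lemma ee_zero (l : List σ) : (ee 0 l : MvPolynomial σ R) = 1 := by unfold ee; rfl
@[simp] lemma ee_nil_succ (k : ℕ) : (ee (k + 1) ([] : List σ) : MvPolynomial σ R) = 0 := by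
  unfold ee; rfl
lemma ee_cons (k : ℕ) (a : σ) (l : List σ) :
    (ee (k + 1) (a :: l) : MvPolynomial σ R) = ee (k + 1) l + X a * ee k l := by rw [ee]

lemma ee_eq_zero_of_length_lt : ∀ (l : List σ) (k : ℕ), l.length < k →
    (ee k l : MvPolynomial σ R) = 0 := by
  intro l
  induction l with
  | nil => intro k hk; match k, hk with
    | k + 1, _ => simp
  | cons a l ih => intro k hk; match k, hk with
    | k + 1, hk =>
      simp only [List.length_cons] at hk
      rw [ee_cons, ih _ (by omega), ih _ (by omega), mul_zero, add_zero]

lemma ee_append_singleton : ∀ (l : List σ) (a : σ) (k : ℕ),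
    (ee (k + 1) (l ++ [a]) : MvPolynomial σ R) = ee (k + 1) l + X a * ee k l := by
  intro l
  induction l with
  | nil => intro a k; cases k <;> simp [ee_cons]
  | cons b l ih =>
    intro a k
    rw [List.cons_append, ee_cons, ih, ee_cons]
    cases k with
    | zero => simp [ee_cons]; ring
    | succ k => rw [ih, ee_cons]; ring

/-- Expansion of `hh` over the head variable. -/
lemma hh_cons_expand (a : σ) (l : List σ) : ∀ m : ℕ,
    (hh m (a :: l) : MvPolynomial σ R) =
      ∑ e ∈ Finset.range (m + 1), X a ^ e * hh (m - e) l := by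
  intro m
  induction m with
  | zero => simp
  | succ m ih =>
    rw [hh_cons, ih, Finset.sum_range_succ' (fun e => X a ^ e * hh (m + 1 - e) l)]
    simp only [pow_zero, one_mul, Nat.sub_zero, Finset.mul_sum]
    rw [add_comm]
    congr 1
    refine Finset.sum_congr rfl fun e he => ?_
    rw [Finset.mem_range] at he
    have : m + 1 - (e + 1) = m - e := by omega
    rw [this]; ring

end

section

variable {σ : Type*} {R : Type*} [CommRing R]

/-- The master convolution identity. -/
lemma master (u : List σ) : ∀ p, p ≤ u.length → ∀ m,
    ∑ k ∈ Finset.range (m + 1),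
      (-1 : MvPolynomial σ R) ^ k * ee k (u.take p) * hh (m - k) u = hh m (u.drop p) := by
  intro p
  induction p with
  | zero =>
    intro _ m
    rw [List.take_zero, List.drop_zero]
    rw [Finset.sum_eq_single 0]
    · simp
    · intro k hk hk0
      match k, hk0 with
      | k + 1, _ => simp
    · intro h; exact absurd (Finset.mem_range.2 (by omega)) h
  | succ p ih =>
    intro hp m
    have hplt : p < u.length := by omega
    have htake : u.take (p + 1) = u.take p ++ [u[p]] := by
      rw [List.take_succ]
      congr
      simp [List.getElem?_eq_getElem hplt]
    have hdrop : u.drop p = u[p] :: u.drop (p + 1) := List.drop_eq_getElem_cons hplt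
    have hee : ∀ k, (ee k (u.take (p + 1)) : MvPolynomial σ R) =
        ee k (u.take p) + (if k = 0 then 0 else X u[p] * ee (k - 1) (u.take p)) := by
      intro k
      cases k with
      | zero => simp
      | succ k => rw [htake, ee_append_singleton]; simp
    have hsplit : ∑ k ∈ Finset.range (m + 1),
        (-1 : MvPolynomial σ R) ^ k * ee k (u.take (p + 1)) * hh (m - k) u =
        (∑ k ∈ Finset.range (m + 1),
          (-1 : MvPolynomial σ R) ^ k * ee k (u.take p) * hh (m - k) u) +
        ∑ k ∈ Finset.range (m + 1), (-1 : MvPolynomial σ R) ^ k *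
          (if k = 0 then 0 else X u[p] * ee (k - 1) (u.take p)) * hh (m - k) u := by
      rw [← Finset.sum_add_distrib]
      refine Finset.sum_congr rfl fun k _ => ?_
      rw [hee]; ring
    rw [hsplit, ih (by omega) m]
    cases m with
    | zero =>
      rw [Finset.range_one, Finset.sum_singleton]
      simp
    | succ m =>
      have hsecond : ∑ k ∈ Finset.range (m + 1 + 1), (-1 : MvPolynomial σ R) ^ k *
          (if k = 0 then 0 else X u[p] * ee (k - 1) (u.take p)) * hh (m + 1 - k) u =
          -(X u[p] * hh m (u.drop p)) := by
        rw [Finset.sum_range_succ' (fun k => (-1 : MvPolynomial σ R) ^ k *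
          (if k = 0 then 0 else X u[p] * ee (k - 1) (u.take p)) * hh (m + 1 - k) u)]
        have h0 : ((-1 : MvPolynomial σ R) ^ 0 *
            (if (0 : ℕ) = 0 then 0 else X u[p] * ee (0 - 1) (u.take p)) * hh (m + 1 - 0) u)
            = 0 := by simp
        rw [h0, add_zero, ← ih (by omega) m, Finset.mul_sum, ← Finset.sum_neg_distrib]
        refine Finset.sum_congr rfl fun j _ => ?_
        rw [if_neg (Nat.succ_ne_zero j)]
        have h1 : m + 1 - (j + 1) = m - j := by omega
        have h2 : j + 1 - 1 = j := rfl
        simp only [h1, h2, Nat.sub_zero]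
        ring
      rw [hsecond, hdrop, hh_cons, ← hdrop]
      ring
end

section

variable {σ : Type*} {R : Type*} [CommRing R]
variable (J : Ideal (MvPolynomial σ R)) (u : List σ)

section Membership
variable (hJ : ∀ k, 1 ≤ k → k ≤ u.length → (ee k u : MvPolynomial σ R) ∈ J)
include hJ

/-- Complete homogeneous polynomials in all the variables lie in `J`. -/
lemma full_mem : ∀ m, 1 ≤ m → (hh m u : MvPolynomial σ R) ∈ J := by
  intro m hm
  have h := master (R := R) u u.length le_rfl m
  rw [List.take_length, List.drop_length] at h
  obtain ⟨m, rfl⟩ : ∃ m', m = m' + 1 := ⟨m - 1, by omega⟩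
  rw [hh_nil_succ] at h
  rw [Finset.sum_range_succ' (fun k =>
    (-1 : MvPolynomial σ R) ^ k * ee k u * hh (m + 1 - k) u)] at h
  simp only [pow_zero, one_mul, ee_zero, Nat.sub_zero] at h
  have hmem : ∑ k ∈ Finset.range (m + 1),
      (-1 : MvPolynomial σ R) ^ (k + 1) * ee (k + 1) u * hh (m + 1 - (k + 1)) u ∈ J := by
    refine Ideal.sum_mem J fun k _ => ?_
    by_cases hk : k + 1 ≤ u.length
    · exact Ideal.mul_mem_right _ J (Ideal.mul_mem_left J _ (hJ (k + 1) (by omega) hk))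
    · rw [ee_eq_zero_of_length_lt u (k + 1) (by omega), mul_zero, zero_mul]
      exact J.zero_mem
  have : (hh (m + 1) u : MvPolynomial σ R) = -(∑ k ∈ Finset.range (m + 1),
      (-1 : MvPolynomial σ R) ^ (k + 1) * ee (k + 1) u * hh (m + 1 - (k + 1)) u) := by
    linear_combination h
  rw [this]
  exact J.neg_mem hmem

/-- Complete homogeneous polynomials of high degree in a suffix of the variables lie in `J`. -/
lemma suffix_mem : ∀ p m, p < m → (hh m (u.drop p) : MvPolynomial σ R) ∈ J := by
  intro p m hpm
  by_cases hp : p ≤ u.length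
  · rw [← master (R := R) u p hp m]
    refine Ideal.sum_mem J fun k hk => ?_
    by_cases hkp : k ≤ p
    · refine Ideal.mul_mem_left J _ (full_mem J u hJ _ (by omega))
    · rw [ee_eq_zero_of_length_lt (u.take p) k
        (by rw [List.length_take]; omega), mul_zero, zero_mul]
      exact J.zero_mem
  · rw [List.drop_eq_nil_of_le (by omega)]
    obtain ⟨m, rfl⟩ : ∃ m', m = m' + 1 := ⟨m - 1, by omega⟩
    rw [hh_nil_succ]
    exact J.zero_mem

end Membership
end

section

variable {σ : Type*} {R : Type*} [CommRing R]

/-- Weighted product of the variables of `l`, where the variable at (absolute) position `q`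
gets exponent `q`. -/
noncomputable def wprod : List σ → ℕ → MvPolynomial σ R
  | [], _ => 1
  | a :: l, q => X a ^ q * wprod l (q + 1)

@[simp] lemma wprod_nil (q : ℕ) : (wprod [] q : MvPolynomial σ R) = 1 := rfl
lemma wprod_cons (a : σ) (l : List σ) (q : ℕ) :
    (wprod (a :: l) q : MvPolynomial σ R) = X a ^ q * wprod l (q + 1) := rfl

variable (J : Ideal (MvPolynomial σ R)) (u : List σ)
  (hJ : ∀ k, 1 ≤ k → k ≤ u.length → (ee k u : MvPolynomial σ R) ∈ J)

lemma wprod_drop_succ {p : ℕ} (hp : p < u.length) :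
    (wprod (u.drop p) p : MvPolynomial σ R) =
      X u[p] ^ p * wprod (u.drop (p + 1)) (p + 1) := by
  rw [List.drop_eq_getElem_cons hp, wprod_cons]

include hJ

lemma Plem {p : ℕ} (hp : p < u.length)
    (hC : ∀ r, 1 ≤ r →
      (wprod (u.drop (p + 1)) (p + 1) * hh r (u.drop (p + 1)) : MvPolynomial σ R) ∈ J) :
    ∀ m, p + 1 ≤ m → (wprod (u.drop (p + 1)) (p + 1) * X u[p] ^ m : MvPolynomial σ R) ∈ J := by
  intro m hm
  set N' : MvPolynomial σ R := wprod (u.drop (p + 1)) (p + 1) with hN'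
  have hdrop : u.drop p = u[p] :: u.drop (p + 1) := List.drop_eq_getElem_cons hp
  have hexp : (hh m (u.drop p) : MvPolynomial σ R) =
      ∑ e ∈ Finset.range (m + 1), X u[p] ^ e * hh (m - e) (u.drop (p + 1)) := by
    rw [hdrop, hh_cons_expand]
  have key : (N' * X u[p] ^ m : MvPolynomial σ R) =
      N' * hh m (u.drop p) -
        ∑ e ∈ Finset.range m, X u[p] ^ e * (N' * hh (m - e) (u.drop (p + 1))) := by
    rw [hexp, Finset.sum_range_succ, Nat.sub_self, hh_zero, mul_one, mul_add, Finset.mul_sum]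
    have hsum : ∑ e ∈ Finset.range m, (N' * (X u[p] ^ e * hh (m - e) (u.drop (p + 1)))) =
        ∑ e ∈ Finset.range m, X u[p] ^ e * (N' * hh (m - e) (u.drop (p + 1))) :=
      Finset.sum_congr rfl fun e _ => by ring
    rw [hsum]
    ring
  rw [key]
  refine J.sub_mem (Ideal.mul_mem_left J _ (suffix_mem J u hJ p m (by omega)))
    (Ideal.sum_mem J fun e he => ?_)
  rw [Finset.mem_range] at he
  exact Ideal.mul_mem_left J _ (hC (m - e) (by omega))

lemma Cq : ∀ p, ∀ r, 1 ≤ r →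
    (wprod (u.drop p) p * hh r (u.drop p) : MvPolynomial σ R) ∈ J := by
  intro p
  by_cases hp : p < u.length
  · intro r hr
    have hdrop : u.drop p = u[p] :: u.drop (p + 1) := List.drop_eq_getElem_cons hp
    have hCnext := Cq (p + 1)
    set N' : MvPolynomial σ R := wprod (u.drop (p + 1)) (p + 1) with hN'
    have hexpand : (wprod (u.drop p) p * hh r (u.drop p) : MvPolynomial σ R) =
        ∑ e ∈ Finset.range (r + 1),
          X u[p] ^ p * X u[p] ^ e * (N' * hh (r - e) (u.drop (p + 1))) := by
      rw [wprod_drop_succ u hp, hdrop, hh_cons_expand, Finset.mul_sum]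
      exact Finset.sum_congr rfl fun e _ => by ring
    rw [hexpand]
    refine Ideal.sum_mem J fun e _ => ?_
    rcases Nat.eq_zero_or_pos e with rfl | he0
    · exact Ideal.mul_mem_left J _ (hCnext r hr)
    · have hm : (N' * X u[p] ^ (p + e) : MvPolynomial σ R) ∈ J :=
        Plem J u hJ hp hCnext (p + e) (by omega)
      have : (X u[p] ^ p * X u[p] ^ e * (N' * hh (r - e) (u.drop (p + 1))) :
          MvPolynomial σ R) = hh (r - e) (u.drop (p + 1)) * (N' * X u[p] ^ (p + e)) := by
        rw [pow_add]; ring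
      rw [this]
      exact Ideal.mul_mem_left J _ hm
  · intro r hr
    rw [List.drop_eq_nil_of_le (by omega)]
    obtain ⟨r, rfl⟩ : ∃ r', r = r' + 1 := ⟨r - 1, by omega⟩
    rw [hh_nil_succ, mul_zero]
    exact J.zero_mem
termination_by p => u.length - p
decreasing_by omega

/-- The staircase monomial lies in `J`. -/
lemma staircase_mem {p : ℕ} (hp : p < u.length) :
    (X u[p] * wprod (u.drop p) p : MvPolynomial σ R) ∈ J := by
  have h := Plem J u hJ hp (fun r hr => Cq J u hJ (p + 1) r hr) (p + 1) le_rfl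
  have : (X u[p] * wprod (u.drop p) p : MvPolynomial σ R) =
      wprod (u.drop (p + 1)) (p + 1) * X u[p] ^ (p + 1) := by
    rw [wprod_drop_succ u hp, pow_succ]; ring
  rw [this]
  exact h
end

section

variable {σ : Type*} {R : Type*} [CommRing R]

lemma ee_eq_multiset_esymm : ∀ (l : List σ) (k : ℕ),
    (ee k l : MvPolynomial σ R) = Multiset.esymm (↑(l.map (X : σ → MvPolynomial σ R))) k := by
  intro l
  induction l with
  | nil =>
    intro k
    cases k with
    | zero => simp [Multiset.esymm]
    | succ k => simp [Multiset.esymm, Multiset.powersetCard_zero_right]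
  | cons a l ih =>
    intro k
    cases k with
    | zero => simp [Multiset.esymm]
    | succ k =>
      have hcoe : (↑((a :: l).map (X : σ → MvPolynomial σ R)) : Multiset (MvPolynomial σ R)) =
          X a ::ₘ ↑(l.map (X : σ → MvPolynomial σ R)) := by simp
      rw [ee_cons, ih, ih, hcoe]
      simp only [Multiset.esymm]
      rw [Multiset.powersetCard_cons, Multiset.map_add, Multiset.sum_add, Multiset.map_map]
      congr 1
      rw [← Multiset.sum_map_mul_left]
      refine congrArg _ (Multiset.map_congr rfl fun t _ => ?_)
      simp [Multiset.prod_cons]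
end

section
variable {k : Type} [Field k] {n : ℕ}

noncomputable def uu (n : ℕ) : List (Fin n) := (List.finRange n).reverse

@[simp] lemma uu_length : (uu n).length = n := by simp [uu]

lemma uu_get (q : ℕ) (h : q < (uu n).length) : ((uu n)[q] : Fin n).val = n - 1 - q := by
  simp [uu, List.getElem_reverse]

lemma ee_uu_mem (K : ℕ) (h1 : 1 ≤ K) (h2 : K ≤ (uu n).length) :
    (ee K (uu n) : MvPolynomial (Fin n) k) ∈ coinvIdeal k n := by
  have hcoe : (↑((uu n).map (X : Fin n → MvPolynomial (Fin n) k)) :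
      Multiset (MvPolynomial (Fin n) k)) =
      (univ : Finset (Fin n)).val.map (X : Fin n → MvPolynomial (Fin n) k) := by
    have : ((uu n : List (Fin n)) : Multiset (Fin n)) = (univ : Finset (Fin n)).val := by
      rw [uu, Multiset.coe_reverse, Fin.univ_def]
    rw [← this]
    simp [uu]
  have : (ee K (uu n) : MvPolynomial (Fin n) k) = esymm (Fin n) k K := by
    rw [ee_eq_multiset_esymm, hcoe, esymm_eq_multiset_esymm]
  rw [this]
  exact Ideal.subset_span ⟨K, Set.mem_Icc.2 ⟨h1, by simpa using h2⟩, rfl⟩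

lemma wprod_eval : ∀ t p, p + t = n →
    (wprod ((uu n).drop p) p : MvPolynomial (Fin n) k) =
      ∏ j ∈ Finset.univ.filter (fun j : Fin n => (j : ℕ) + p ≤ n - 1),
        X j ^ (n - 1 - (j : ℕ)) := by
  intro t
  induction t with
  | zero =>
    intro p hp
    rw [List.drop_eq_nil_of_le (by simp; omega), wprod_nil]
    have : Finset.univ.filter (fun j : Fin n => (j : ℕ) + p ≤ n - 1) = ∅ := by
      ext j
      simp only [Finset.mem_filter, Finset.mem_univ, true_and, Finset.notMem_empty,
        iff_false]
      have := j.isLt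
      omega
    rw [this, Finset.prod_empty]
  | succ t ih =>
    intro p hp
    have hplt : p < (uu n).length := by simp; omega
    rw [wprod_drop_succ (uu n) hplt, ih (p + 1) (by omega)]
    set i0 : Fin n := (uu n)[p] with hi0
    have hi0v : (i0 : ℕ) = n - 1 - p := uu_get p hplt
    have hset : Finset.univ.filter (fun j : Fin n => (j : ℕ) + p ≤ n - 1) =
        insert i0 (Finset.univ.filter (fun j : Fin n => (j : ℕ) + (p + 1) ≤ n - 1)) := by
      ext j
      simp only [Finset.mem_filter, Finset.mem_univ, true_and, Finset.mem_insert,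
        Fin.ext_iff, hi0v]
      have := j.isLt
      omega
    have hnotmem : i0 ∉ Finset.univ.filter (fun j : Fin n => (j : ℕ) + (p + 1) ≤ n - 1) := by
      simp only [Finset.mem_filter, Finset.mem_univ, true_and, hi0v]
      omega
    rw [hset, Finset.prod_insert hnotmem, hi0v]
    have : n - 1 - (n - 1 - p) = p := by omega
    rw [this]

end

end Stmt13Aux

open Stmt13Aux MvPolynomial Finset in
/-- For every `1 ≤ i ≤ n` (here `i : Fin n` is zero-based, so it denotes
the variable `x_{i+1}`), the monomial
`x_1^{n-1} x_2^{n-2} ⋯ x_{i-1}^{n-i+1} · x_i^{n-i+1}` lies in the ideal generated by the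
elementary symmetric polynomials. -/
theorem stmt13 {k : Type} [Field k] {n : ℕ} (hn : 0 < n) (i : Fin n) :
    (∏ j ∈ Finset.Iio i, MvPolynomial.X j ^ (n - 1 - (j : ℕ))) *
      MvPolynomial.X i ^ (n - (i : ℕ)) ∈ coinvIdeal k n := by
  set p : ℕ := n - 1 - (i : ℕ) with hp
  have hiv := i.isLt
  have hplt : p < (uu n).length := by simp; omega
  have hup : ((uu n)[p] : Fin n) = i := by
    have := uu_get (n := n) p hplt
    rw [Fin.ext_iff, this]
    omega
  have hmem := staircase_mem (coinvIdeal k n) (uu n)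
    (fun K h1 h2 => ee_uu_mem K h1 h2) hplt
  rw [hup] at hmem
  have heval : (wprod ((uu n).drop p) p : MvPolynomial (Fin n) k) =
      ∏ j ∈ Finset.Iic i, MvPolynomial.X j ^ (n - 1 - (j : ℕ)) := by
    rw [wprod_eval (n - p) p (by omega)]
    congr 1
    ext j
    simp only [Finset.mem_filter, Finset.mem_univ, true_and, Finset.mem_Iic, Fin.le_def]
    have := j.isLt
    omega
  rw [heval] at hmem
  have hIic : (∏ j ∈ Finset.Iic i, MvPolynomial.X j ^ (n - 1 - (j : ℕ)) :
      MvPolynomial (Fin n) k) =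
      MvPolynomial.X i ^ (n - 1 - (i : ℕ)) * ∏ j ∈ Finset.Iio i,
        MvPolynomial.X j ^ (n - 1 - (j : ℕ)) := by
    rw [← Finset.Iio_insert, Finset.prod_insert (by simp)]
  rw [hIic] at hmem
  have hfinal : (MvPolynomial.X i * (MvPolynomial.X i ^ (n - 1 - (i : ℕ)) *
      ∏ j ∈ Finset.Iio i, MvPolynomial.X j ^ (n - 1 - (j : ℕ))) : MvPolynomial (Fin n) k) =
      (∏ j ∈ Finset.Iio i, MvPolynomial.X j ^ (n - 1 - (j : ℕ))) *
        MvPolynomial.X i ^ (n - (i : ℕ)) := by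
    have : n - (i : ℕ) = (n - 1 - (i : ℕ)) + 1 := by omega
    rw [this, pow_succ]
    ring
  rw [hfinal] at hmem
  exact hmem
end

section
/- Let k be a field, n a positive integer, and I ⊆ k[x_1,…,x_n] the ideal generated by the elementary symmetric polynomials E_1,…,E_n. Order monomials lexicographically by their exponent vectors: x_1^{a_1}⋯x_n^{a_n} > x_1^{b_1}⋯x_n^{b_n} iff a_s > b_s where s is the first index with a_s ≠ b_s. Then every monomial that is strictly greater than Δ := x_1^{n-1} x_2^{n-2} ⋯ x_{n-1}^1 in this order belongs to I. -/
open scoped BigOperators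

universe u

namespace Stmt14Aux

open MvPolynomial Finset

variable (k : Type) [Field k] {n : ℕ}

/-- monomial with exponent vector `e` -/
noncomputable def mon (e : Fin n → ℕ) : MvPolynomial (Fin n) k :=
  ∏ i, X i ^ e i

lemma mon_mul (e f : Fin n → ℕ) :
    mon k e * mon k f = mon k (fun j => e j + f j) := by
  simp [mon, ← Finset.prod_mul_distrib, pow_add]

/-- elementary symmetric polynomial in a subset of the variables -/
noncomputable def auxE (m : ℕ) (A : Finset (Fin n)) : MvPolynomial (Fin n) k :=
  ∑ S ∈ A.powersetCard m, ∏ i ∈ S, X i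

lemma auxE_univ (m : ℕ) : auxE k m (univ : Finset (Fin n)) = esymm (Fin n) k m := rfl

lemma auxE_zero (A : Finset (Fin n)) : auxE k 0 A = 1 := by
  simp [auxE]

lemma auxE_insert (m : ℕ) {a : Fin n} {A : Finset (Fin n)} (ha : a ∉ A) :
    auxE k (m + 1) (insert a A) = auxE k (m + 1) A + X a * auxE k m A := by
  unfold auxE
  rw [Finset.powersetCard_succ_insert ha, Finset.sum_union, Finset.sum_image, Finset.mul_sum]
  · congr 1
    refine Finset.sum_congr rfl fun S hS => ?_
    have haS : a ∉ S := fun h => ha ((Finset.mem_powersetCard.1 hS).1 h)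
    rw [Finset.prod_insert haS]
  · intro S hS T hT hST
    have haS : a ∉ S := fun h => ha ((Finset.mem_powersetCard.1 hS).1 h)
    have haT : a ∉ T := fun h => ha ((Finset.mem_powersetCard.1 hT).1 h)
    rw [← Finset.erase_insert haS, ← Finset.erase_insert haT, hST]
  · rw [Finset.disjoint_left]
    intro S hS hS'
    have haS : a ∉ S := fun h => ha ((Finset.mem_powersetCard.1 hS).1 h)
    obtain ⟨T, _, rfl⟩ := Finset.mem_image.1 hS'
    exact haS (Finset.mem_insert_self a T)

lemma esymm_mem {j : ℕ} (hj : 1 ≤ j) : esymm (Fin n) k j ∈ coinvIdeal k n := by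
  rcases le_or_gt j n with h | h
  · exact Ideal.subset_span ⟨j, ⟨hj, h⟩, rfl⟩
  · have : (Finset.univ : Finset (Fin n)).powersetCard j = ∅ :=
      Finset.powersetCard_eq_empty.2 (by simpa using h)
    rw [esymm, this, Finset.sum_empty]
    exact (coinvIdeal k n).zero_mem

/-- key congruence: `x_s^m ≡ (-1)^m e_m(other variables) mod I` -/
lemma key (s : Fin n) (m : ℕ) :
    X s ^ m - (-1 : MvPolynomial (Fin n) k) ^ m * auxE k m (univ.erase s) ∈ coinvIdeal k n := by
  induction m with
  | zero => simp [auxE_zero]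
  | succ m ih =>
    have hins : insert s ((univ : Finset (Fin n)).erase s) = univ := by
      simp [Finset.insert_erase (Finset.mem_univ s)]
    have hE := auxE_insert k (n := n) m (Finset.notMem_erase s univ)
    rw [hins, auxE_univ] at hE
    have heq : X s ^ (m + 1) - (-1 : MvPolynomial (Fin n) k) ^ (m + 1) *
        auxE k (m + 1) (univ.erase s) =
        X s * (X s ^ m - (-1 : MvPolynomial (Fin n) k) ^ m * auxE k m (univ.erase s))
          - (-1 : MvPolynomial (Fin n) k) ^ (m + 1) * esymm (Fin n) k (m + 1) := by
      rw [hE]; ring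
    rw [heq]
    exact sub_mem (Ideal.mul_mem_left _ _ ih)
      (Ideal.mul_mem_left _ _ (esymm_mem k (Nat.succ_le_succ (Nat.zero_le m))))

/-- the staircase prefix monomial -/
noncomputable def pre (s : Fin n) : MvPolynomial (Fin n) k :=
  mon k (fun j => if j < s then n - 1 - (j : ℕ) else 0)

lemma prod_eq_mon (S : Finset (Fin n)) :
    (∏ i ∈ S, X i) = mon k (fun j => if j ∈ S then 1 else 0) := by
  rw [mon]
  rw [show (∏ j, X j ^ (if j ∈ S then 1 else 0) : MvPolynomial (Fin n) k)
      = ∏ j, (if j ∈ S then X j else 1) from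
    Finset.prod_congr rfl fun j _ => by split <;> simp]
  rw [Finset.prod_ite_mem, Finset.univ_inter]

lemma X_pow_eq_mon (t : Fin n) (c : ℕ) :
    (X t : MvPolynomial (Fin n) k) ^ c = mon k (fun j => if j = t then c else 0) := by
  rw [mon]
  rw [show (∏ j, X j ^ (if j = t then c else 0) : MvPolynomial (Fin n) k)
      = ∏ j, (if j = t then X j ^ c else 1) from
    Finset.prod_congr rfl fun j _ => by split <;> simp]
  rw [Finset.prod_ite_eq' Finset.univ t (fun j => X j ^ c)]
  simp

lemma main (N : ℕ) : ∀ s : Fin n, (s : ℕ) = N → ∀ m, n - (s : ℕ) ≤ m →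
    pre k s * X s ^ m ∈ coinvIdeal k n := by
  induction N using Nat.strong_induction_on with
  | _ N IH =>
    rintro s rfl m hm
    have h1 : pre k s * X s ^ m =
        pre k s * (X s ^ m - (-1 : MvPolynomial (Fin n) k) ^ m * auxE k m (univ.erase s))
          + (-1 : MvPolynomial (Fin n) k) ^ m * (pre k s * auxE k m (univ.erase s)) := by
      ring
    rw [h1]
    refine add_mem (Ideal.mul_mem_left _ _ (key k s m)) (Ideal.mul_mem_left _ _ ?_)
    rw [auxE, Finset.mul_sum]
    refine Ideal.sum_mem _ fun S hS => ?_
    obtain ⟨hSsub, hScard⟩ := Finset.mem_powersetCard.1 hS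
    have hns : (s : ℕ) < n := s.isLt
    -- find an element of S strictly below s
    have hex : ∃ t ∈ S, t < s := by
      by_contra hcon
      push_neg at hcon
      have hsub : S ⊆ Finset.Ioi s := by
        intro t ht
        have hne : t ≠ s := Finset.ne_of_mem_erase (hSsub ht)
        have := hcon t ht
        exact Finset.mem_Ioi.2 (lt_of_le_of_ne this (Ne.symm hne))
      have hcard := Finset.card_le_card hsub
      rw [Fin.card_Ioi, hScard] at hcard
      omega
    obtain ⟨t, htS, hts⟩ := hex
    have hnt : (t : ℕ) < n := t.isLt
    have hdec : pre k s * ∏ i ∈ S, X i =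
        (pre k t * X t ^ (n - (t : ℕ))) *
          mon k (fun j => (if j < s then n - 1 - (j : ℕ) else 0) + (if j ∈ S then 1 else 0)
            - ((if j < t then n - 1 - (j : ℕ) else 0) + (if j = t then n - (t : ℕ) else 0))) := by
      rw [prod_eq_mon, pre, pre, X_pow_eq_mon, mon_mul, mon_mul, mon_mul]
      congr 1
      funext j
      have hjt : ((j : ℕ) < (t : ℕ)) ↔ j < t := Iff.rfl
      by_cases h1 : j < t
      · have h2 : j < s := h1.trans hts
        have h3 : j ≠ t := ne_of_lt h1
        by_cases hjS : j ∈ S <;> simp [h1, h2, h3, hjS]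
      · by_cases h3 : j = t
        · subst h3
          have h2 : j < s := hts
          have h4 : (j : ℕ) ≤ n - 1 := by omega
          simp [h1, h2, htS]
          omega
        · have h2' : t < j := lt_of_le_of_ne (not_lt.1 h1) (Ne.symm h3)
          by_cases h2 : j < s <;> by_cases hjS : j ∈ S <;>
            simp [h1, h2, h3, hjS]
    rw [hdec]
    have htlt : (t : ℕ) < (s : ℕ) := hts
    exact Ideal.mul_mem_right _ _ (IH (t : ℕ) htlt t rfl (n - (t : ℕ)) le_rfl)

end Stmt14Aux

/-- Every monomial `x^d` that is strictly greater than
`Δ = x_1^{n-1} x_2^{n-2} ⋯ x_{n-1}` in the lexicographic order on exponent vectors lies in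
the ideal generated by the elementary symmetric polynomials. -/
theorem stmt14 {k : Type} [Field k] {n : ℕ} (hn : 0 < n) (d : Fin n → ℕ)
    (hlex : ∃ s : Fin n, (∀ j : Fin n, j < s → d j = n - 1 - (j : ℕ)) ∧
      n - 1 - (s : ℕ) < d s) :
    (∏ i, MvPolynomial.X i ^ d i) ∈ coinvIdeal k n := by
  classical
  open Stmt14Aux MvPolynomial in
  obtain ⟨s, hpre, hs⟩ := hlex
  have hns : (s : ℕ) < n := s.isLt
  have hmem := main k (s : ℕ) s rfl (d s) (by omega)
  have hdec : (∏ i, MvPolynomial.X i ^ d i) =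
      (pre k s * X s ^ d s) * mon k (fun j => if j ≤ s then 0 else d j) := by
    rw [pre, X_pow_eq_mon, mon_mul, mon_mul]
    show mon k d = _
    congr 1
    funext j
    rcases lt_trichotomy j s with h | h | h
    · have h1 : j ≠ s := ne_of_lt h
      have h2 : j ≤ s := le_of_lt h
      have := hpre j h
      simp [h, h1, h2]
      omega
    · subst h
      simp
    · have h1 : ¬ j < s := not_lt.2 (le_of_lt h)
      have h2 : j ≠ s := (ne_of_lt h).symm
      have h3 : ¬ j ≤ s := not_le.2 h
      simp [h1, h2, h3]
  rw [hdec]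
  exact Ideal.mul_mem_right _ _ hmem
end

section
/- Let k be a field, n a positive integer, and I ⊆ k[x_1,…,x_n] the ideal generated by the elementary symmetric polynomials E_1,…,E_n. Let Δ := ∏_{j=1}^n x_j^{n-j}. Then for every permutation σ ∈ S_n (acting on polynomials by permuting the variables, σ(f)(x_1,…,x_n) = f(x_{σ^{-1}(1)},…,x_{σ^{-1}(n)})), one has σ(Δ) − sgn(σ)·Δ ∈ I; that is, in the coinvariant algebra C = k[x_1,…,x_n]/I the image of Δ transforms by the sign character under the S_n-action. -/
open scoped BigOperators

universe u

open MvPolynomial Finset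

variable {k : Type} [Field k]

lemma multiset_esymm_cons {R : Type*} [CommSemiring R] (a : R) (s : Multiset R) (j : ℕ) :
    (a ::ₘ s).esymm (j + 1) = s.esymm (j + 1) + a * s.esymm j := by
  rw [Multiset.esymm, Multiset.powersetCard_cons, Multiset.map_add, Multiset.sum_add,
    Multiset.map_map, Multiset.esymm, Multiset.esymm]
  congr 1
  have : ((Multiset.powersetCard j s).map (Multiset.prod ∘ Multiset.cons a)).sum
      = ((Multiset.powersetCard j s).map (fun t => a * t.prod)).sum := by
    congr 1
    apply Multiset.map_congr rfl
    intro t _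
    simp [Multiset.prod_cons]
  rw [this, Multiset.sum_map_mul_left]

lemma rename_esymm_succAbove (n j : ℕ) (p : Fin (n + 1)) :
    rename p.succAbove (esymm (Fin n) k j)
      = ((Finset.univ.val.map (X ∘ p.succAbove)).esymm j
        : MvPolynomial (Fin (n + 1)) k) := by
  rw [Finset.esymm_map_val]
  rw [esymm, map_sum]
  apply Finset.sum_congr rfl
  intro t _
  rw [map_prod]
  simp [Function.comp]

lemma esymm_rec (n j : ℕ) (p : Fin (n + 1)) :
    esymm (Fin (n + 1)) k (j + 1)
      = rename p.succAbove (esymm (Fin n) k (j + 1))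
        + X p * rename p.succAbove (esymm (Fin n) k j) := by
  rw [rename_esymm_succAbove, rename_esymm_succAbove, esymm_eq_multiset_esymm]
  have huniv : (Finset.univ.val.map (X : Fin (n+1) → MvPolynomial (Fin (n+1)) k))
      = X p ::ₘ (Finset.univ.val.map (X ∘ p.succAbove)) := by
    rw [Fin.univ_succAbove n p, Finset.cons_val, Multiset.map_cons, Finset.map_val,
      Multiset.map_map]
    rfl
  rw [huniv, multiset_esymm_cons]

lemma esymm_gen_mem {m j : ℕ} (h1 : 1 ≤ j) (h2 : j ≤ m) :
    esymm (Fin m) k j ∈ coinvIdeal k m :=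
  Ideal.subset_span ⟨j, ⟨h1, h2⟩, rfl⟩

lemma esymm_top_eq_zero (n : ℕ) : (esymm (Fin n) k (n + 1)) = 0 := by
  rw [esymm, Finset.powersetCard_eq_empty.2 (by simp), Finset.sum_empty]

lemma E_lemma (n : ℕ) (p : Fin (n + 1)) :
    ∀ j, j ≤ n + 1 →
      rename p.succAbove (esymm (Fin n) k j) - (-X p) ^ j ∈ coinvIdeal k (n + 1) := by
  intro j
  induction j with
  | zero => intro _; simp
  | succ j ih =>
    intro hj
    have hmem := ih (by omega)
    have key : rename p.succAbove (esymm (Fin n) k (j + 1)) - (-X p) ^ (j + 1)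
        = esymm (Fin (n + 1)) k (j + 1)
          + (-(X p)) * (rename p.succAbove (esymm (Fin n) k j) - (-X p) ^ j) := by
      rw [esymm_rec n j p]; ring
    rw [key]
    exact add_mem (esymm_gen_mem (by omega) hj) (Ideal.mul_mem_left _ _ hmem)

lemma X_pow_mem (n : ℕ) (p : Fin (n + 1)) :
    (X p : MvPolynomial (Fin (n + 1)) k) ^ (n + 1) ∈ coinvIdeal k (n + 1) := by
  have h := E_lemma (k := k) n p (n + 1) le_rfl
  rw [esymm_top_eq_zero, map_zero] at h
  have h2 := Ideal.mul_mem_left _ ((-1 : MvPolynomial (Fin (n+1)) k) ^ (n + 1)) h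
  have e : (-1 : MvPolynomial (Fin (n+1)) k) ^ (n + 1) * (0 - (-X p) ^ (n + 1))
      = -(X p ^ (n + 1)) := by
    rw [zero_sub, mul_neg, ← mul_pow, neg_one_mul, neg_neg]
  rw [e] at h2
  exact neg_mem_iff.1 h2

lemma rename_perm_mem {m : ℕ} (σ : Equiv.Perm (Fin m)) {g : MvPolynomial (Fin m) k}
    (hg : g ∈ coinvIdeal k m) : rename ⇑σ g ∈ coinvIdeal k m := by
  have hle : Ideal.map ((rename ⇑σ : MvPolynomial (Fin m) k →ₐ[k] MvPolynomial (Fin m) k)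
      : MvPolynomial (Fin m) k →+* MvPolynomial (Fin m) k)
      (coinvIdeal k m) ≤ coinvIdeal k m := by
    rw [coinvIdeal, Ideal.map_span]
    apply Ideal.span_le.2
    rintro _ ⟨_, ⟨j, hj, rfl⟩, rfl⟩
    have h2 : ((rename ⇑σ : MvPolynomial (Fin m) k →ₐ[k] MvPolynomial (Fin m) k)
        : MvPolynomial (Fin m) k →+* MvPolynomial (Fin m) k)
        (esymm (Fin m) k j) = esymm (Fin m) k j := esymm_isSymmetric (Fin m) k j σ
    rw [h2]
    exact Ideal.subset_span ⟨j, hj, rfl⟩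
  exact hle (Ideal.mem_map_of_mem _ hg)

lemma transfer (n : ℕ) (p : Fin (n + 1)) (c : ℕ) (M : MvPolynomial (Fin n) k)
    (hgen : ∀ j, 1 ≤ j → j ≤ n →
      (X p) ^ c * rename p.succAbove (esymm (Fin n) k j * M) ∈ coinvIdeal k (n + 1)) :
    ∀ g ∈ coinvIdeal k n,
      (X p) ^ c * rename p.succAbove (g * M) ∈ coinvIdeal k (n + 1) := by
  intro g hg
  refine Submodule.span_induction ?_ ?_ ?_ ?_ hg
  · rintro _ ⟨j, ⟨h1, h2⟩, rfl⟩
    exact hgen j h1 h2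
  · simp
  · intro x y _ _ hx hy
    have : (X p : MvPolynomial (Fin (n+1)) k) ^ c * rename p.succAbove ((x + y) * M)
        = X p ^ c * rename p.succAbove (x * M) + X p ^ c * rename p.succAbove (y * M) := by
      rw [add_mul, map_add, mul_add]
    rw [this]; exact add_mem hx hy
  · intro r x _ hx
    have : (X p : MvPolynomial (Fin (n+1)) k) ^ c * rename p.succAbove ((r • x) * M)
        = rename p.succAbove r * (X p ^ c * rename p.succAbove (x * M)) := by
      rw [smul_eq_mul, show r * x * M = r * (x * M) by ring, map_mul]; ring
    rw [this]
    exact Ideal.mul_mem_left _ _ hx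

noncomputable def Dl (k : Type) [Field k] (n : ℕ) : MvPolynomial (Fin n) k :=
  ∏ i : Fin n, X i ^ (n - 1 - (i : ℕ))

lemma Dl_zero (n : ℕ) :
    Dl k (n + 1)
      = X (0 : Fin (n + 1)) ^ n
        * rename ((0 : Fin (n + 1)).succAbove) (Dl k n * 1) := by
  rw [mul_one, Dl, Dl, Fin.prod_univ_succAbove
    (fun i : Fin (n+1) => (X i : MvPolynomial (Fin (n+1)) k) ^ (n + 1 - 1 - (i : ℕ))) 0,
    map_prod]
  simp only [map_pow, rename_X, Fin.succAbove_zero, Fin.val_succ, Fin.val_zero]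
  congr 1
  apply Finset.prod_congr rfl
  intro j _
  congr 1
  omega

lemma Dl_last (n : ℕ) :
    Dl k (n + 1)
      = X (Fin.last n) ^ 0
        * rename ((Fin.last n).succAbove) (Dl k n * ∏ i : Fin n, X i) := by
  rw [pow_zero, one_mul, Dl, Dl, map_mul, map_prod, map_prod,
    Fin.prod_univ_castSucc
      (fun i : Fin (n+1) => (X i : MvPolynomial (Fin (n+1)) k) ^ (n + 1 - 1 - (i : ℕ)))]
  simp only [map_pow, rename_X, Fin.succAbove_last, Fin.coe_castSucc, Fin.val_last]
  have hlast : (X (Fin.last n) : MvPolynomial (Fin (n+1)) k) ^ (n + 1 - 1 - n) = 1 := by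
    simp
  rw [hlast, mul_one, ← Finset.prod_mul_distrib]
  apply Finset.prod_congr rfl
  intro j _
  have h2 : n + 1 - 1 - (j : ℕ) = (n - 1 - (j : ℕ)) + 1 := by omega
  rw [h2, pow_succ]

lemma hgen_zero (n : ℕ) : ∀ j, 1 ≤ j → j ≤ n →
    (X (0 : Fin (n+1))) ^ n * rename ((0 : Fin (n+1)).succAbove) (esymm (Fin n) k j * 1)
      ∈ coinvIdeal k (n + 1) := by
  intro j h1 h2
  obtain ⟨j', rfl⟩ : ∃ j', j = j' + 1 := ⟨j - 1, by omega⟩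
  have hE := E_lemma (k := k) n 0 (j' + 1) (by omega)
  have key : (X (0 : Fin (n+1)) : MvPolynomial (Fin (n+1)) k) ^ n
        * rename ((0 : Fin (n+1)).succAbove) (esymm (Fin n) k (j' + 1) * 1)
      = X 0 ^ n * (rename ((0 : Fin (n+1)).succAbove) (esymm (Fin n) k (j' + 1))
          - (-X 0) ^ (j' + 1))
        + ((-1 : MvPolynomial (Fin (n+1)) k) ^ (j' + 1) * X 0 ^ j') * X 0 ^ (n + 1) := by
    rw [mul_one]; ring
  rw [key]
  exact add_mem (Ideal.mul_mem_left _ _ hE) (Ideal.mul_mem_left _ _ (X_pow_mem n 0))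

lemma X_last_mul (n : ℕ) :
    X (Fin.last n) * rename ((Fin.last n).succAbove) (∏ i : Fin n, X i)
      = (esymm (Fin (n+1)) k (n+1) : MvPolynomial (Fin (n+1)) k) := by
  have hps := Finset.powersetCard_self (Finset.univ : Finset (Fin (n+1)))
  rw [Finset.card_univ, Fintype.card_fin] at hps
  rw [esymm, hps, Finset.sum_singleton, map_prod]
  rw [Fin.prod_univ_succAbove (fun i : Fin (n+1) => (X i : MvPolynomial (Fin (n+1)) k))
    (Fin.last n)]
  simp

lemma hgen_last (n : ℕ) : ∀ j, 1 ≤ j → j ≤ n →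
    (X (Fin.last n)) ^ 0
        * rename ((Fin.last n).succAbove) (esymm (Fin n) k j * ∏ i : Fin n, X i)
      ∈ coinvIdeal k (n + 1) := by
  intro j h1 h2
  obtain ⟨j', rfl⟩ : ∃ j', j = j' + 1 := ⟨j - 1, by omega⟩
  have hE := E_lemma (k := k) n (Fin.last n) (j' + 1) (by omega)
  have key : (X (Fin.last n) : MvPolynomial (Fin (n+1)) k) ^ 0
        * rename ((Fin.last n).succAbove) (esymm (Fin n) k (j' + 1) * ∏ i : Fin n, X i)
      = (rename ((Fin.last n).succAbove) (esymm (Fin n) k (j' + 1))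
            - (-X (Fin.last n)) ^ (j' + 1))
          * rename ((Fin.last n).succAbove) (∏ i : Fin n, X i)
        + ((-1 : MvPolynomial (Fin (n+1)) k) ^ (j' + 1) * X (Fin.last n) ^ j')
          * (X (Fin.last n) * rename ((Fin.last n).succAbove) (∏ i : Fin n, X i)) := by
    rw [pow_zero, one_mul, map_mul]; ring
  rw [key, X_last_mul]
  exact add_mem (Ideal.mul_mem_right _ _ hE)
    (Ideal.mul_mem_left _ _ (esymm_gen_mem (by omega) (le_refl (n+1))))

open Equiv Equiv.Perm in
lemma conj_case (n : ℕ) (p : Fin (n + 1)) (τ : Perm (Fin n)) (σ : Perm (Fin (n + 1)))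
    (hcomm : ∀ j, σ (p.succAbove j) = p.succAbove (τ j)) (hp : σ p = p)
    (hsign : Perm.sign σ = Perm.sign τ)
    (c : ℕ) (M : MvPolynomial (Fin n) k)
    (hdec : Dl k (n + 1) = X p ^ c * rename p.succAbove (Dl k n * M))
    (hMτ : rename ⇑τ M = M)
    (hgen : ∀ j, 1 ≤ j → j ≤ n →
      (X p) ^ c * rename p.succAbove (esymm (Fin n) k j * M) ∈ coinvIdeal k (n + 1))
    (IH : rename ⇑τ (Dl k n) - (Perm.sign τ : ℤ) • Dl k n ∈ coinvIdeal k n) :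
    rename ⇑σ (Dl k (n + 1)) - (Perm.sign σ : ℤ) • Dl k (n + 1) ∈ coinvIdeal k (n + 1) := by
  have e1 : rename ⇑σ (Dl k (n + 1)) - (Perm.sign σ : ℤ) • Dl k (n + 1)
      = X p ^ c * rename p.succAbove
          ((rename ⇑τ (Dl k n) - (Perm.sign τ : ℤ) • Dl k n) * M) := by
    rw [hsign, hdec, map_mul, map_pow, rename_X, hp, rename_rename]
    have hfun : ⇑σ ∘ p.succAbove = p.succAbove ∘ ⇑τ := funext hcomm
    rw [hfun, ← rename_rename, map_mul (rename ⇑τ), hMτ]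
    rw [sub_mul, map_sub, mul_sub, smul_mul_assoc, map_zsmul, mul_smul_comm]
  rw [e1]
  exact transfer n p c M hgen _ IH

lemma mul_case {n : ℕ} {σ τ : Equiv.Perm (Fin n)}
    (hσ : rename ⇑σ (Dl k n) - (Equiv.Perm.sign σ : ℤ) • Dl k n ∈ coinvIdeal k n)
    (hτ : rename ⇑τ (Dl k n) - (Equiv.Perm.sign τ : ℤ) • Dl k n ∈ coinvIdeal k n) :
    rename ⇑(σ * τ) (Dl k n) - (Equiv.Perm.sign (σ * τ) : ℤ) • Dl k n ∈ coinvIdeal k n := by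
  have e1 : rename ⇑(σ * τ) (Dl k n) - (Equiv.Perm.sign (σ * τ) : ℤ) • Dl k n
      = rename ⇑σ (rename ⇑τ (Dl k n) - (Equiv.Perm.sign τ : ℤ) • Dl k n)
        + (Equiv.Perm.sign τ : ℤ) • (rename ⇑σ (Dl k n) - (Equiv.Perm.sign σ : ℤ) • Dl k n) := by
    rw [map_sub, map_zsmul, smul_sub, Equiv.Perm.coe_mul, ← rename_rename, map_mul,
      Units.val_mul, smul_smul, mul_comm ((Equiv.Perm.sign τ : ℤ)) ((Equiv.Perm.sign σ : ℤ))]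
    abel
  rw [e1]
  exact add_mem (rename_perm_mem σ hτ) (zsmul_mem hσ _)

open Equiv in
lemma swap_lift (n : ℕ) (p a b : Fin (n + 1)) (hab : a ≠ b) (hap : a ≠ p) (hbp : b ≠ p) :
    ∃ a' b' : Fin n, a' ≠ b' ∧
      (∀ j, (swap a b) (p.succAbove j) = p.succAbove ((swap a' b') j)) ∧
      (swap a b) p = p := by
  obtain ⟨a', ha⟩ := Fin.exists_succAbove_eq hap
  obtain ⟨b', hb⟩ := Fin.exists_succAbove_eq hbp
  refine ⟨a', b', ?_, ?_, ?_⟩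
  · intro h; apply hab; rw [← ha, ← hb, h]
  · intro j
    rcases eq_or_ne j a' with rfl | hja
    · rw [ha, swap_apply_left, swap_apply_left, hb]
    rcases eq_or_ne j b' with rfl | hjb
    · rw [hb, swap_apply_right, swap_apply_right, ha]
    · rw [swap_apply_of_ne_of_ne (fun h => hja (Fin.succAbove_right_injective (h.trans ha.symm)))
        (fun h => hjb (Fin.succAbove_right_injective (h.trans hb.symm))),
        swap_apply_of_ne_of_ne hja hjb]
  · exact swap_apply_of_ne_of_ne (Ne.symm hap) (Ne.symm hbp)

open Equiv in
lemma swap_case_zero (n : ℕ)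
    (IH : ∀ τ : Equiv.Perm (Fin n),
      rename ⇑τ (Dl k n) - (Equiv.Perm.sign τ : ℤ) • Dl k n ∈ coinvIdeal k n)
    (a b : Fin (n + 1)) (hab : a ≠ b) (hap : a ≠ 0) (hbp : b ≠ 0) :
    rename ⇑(swap a b) (Dl k (n + 1))
      - (Equiv.Perm.sign (swap a b) : ℤ) • Dl k (n + 1) ∈ coinvIdeal k (n + 1) := by
  obtain ⟨a', b', hab', hcomm, hp⟩ := swap_lift n 0 a b hab hap hbp
  refine conj_case n 0 (swap a' b') (swap a b) hcomm hp ?_ n 1 (Dl_zero n)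
    (map_one _) (hgen_zero n) (IH _)
  rw [Equiv.Perm.sign_swap hab, Equiv.Perm.sign_swap hab']

open Equiv in
lemma swap_case_last (n : ℕ)
    (IH : ∀ τ : Equiv.Perm (Fin n),
      rename ⇑τ (Dl k n) - (Equiv.Perm.sign τ : ℤ) • Dl k n ∈ coinvIdeal k n)
    (a b : Fin (n + 1)) (hab : a ≠ b) (hap : a ≠ Fin.last n) (hbp : b ≠ Fin.last n) :
    rename ⇑(swap a b) (Dl k (n + 1))
      - (Equiv.Perm.sign (swap a b) : ℤ) • Dl k (n + 1) ∈ coinvIdeal k (n + 1) := by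
  obtain ⟨a', b', hab', hcomm, hp⟩ := swap_lift n (Fin.last n) a b hab hap hbp
  refine conj_case n (Fin.last n) (swap a' b') (swap a b) hcomm hp ?_ 0 (∏ i : Fin n, X i)
    (Dl_last n) ?_ (hgen_last n) (IH _)
  · rw [Equiv.Perm.sign_swap hab, Equiv.Perm.sign_swap hab']
  · rw [map_prod]
    simp only [rename_X]
    exact Equiv.prod_comp (swap a' b') (fun i => (X i : MvPolynomial (Fin n) k))

open Equiv in
lemma swap_two_case :
    rename ⇑(swap (0 : Fin 2) (Fin.last 1)) (Dl k 2)
      - (Equiv.Perm.sign (swap (0 : Fin 2) (Fin.last 1)) : ℤ) • Dl k 2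
      ∈ coinvIdeal k 2 := by
  have hl : (Fin.last 1) = (1 : Fin 2) := rfl
  have hD : Dl k 2 = X 0 := by
    rw [Dl, Fin.prod_univ_two]; simp
  have hsign : Equiv.Perm.sign (swap (0 : Fin 2) (Fin.last 1)) = -1 :=
    Equiv.Perm.sign_swap (by rw [hl]; decide)
  have : rename ⇑(swap (0 : Fin 2) (Fin.last 1)) (Dl k 2)
      - (Equiv.Perm.sign (swap (0 : Fin 2) (Fin.last 1)) : ℤ) • Dl k 2
      = esymm (Fin 2) k 1 := by
    rw [hD, hsign, rename_X, hl, swap_apply_left, esymm_one, Fin.sum_univ_two]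
    simp
    ring
  rw [this]
  exact esymm_gen_mem le_rfl (by omega)

open Equiv in
lemma swap_case (n : ℕ)
    (IH : ∀ τ : Equiv.Perm (Fin n),
      rename ⇑τ (Dl k n) - (Equiv.Perm.sign τ : ℤ) • Dl k n ∈ coinvIdeal k n)
    (a b : Fin (n + 1)) (hab : a ≠ b) :
    rename ⇑(swap a b) (Dl k (n + 1))
      - (Equiv.Perm.sign (swap a b) : ℤ) • Dl k (n + 1) ∈ coinvIdeal k (n + 1) := by
  by_cases h0 : a ≠ 0 ∧ b ≠ 0
  · exact swap_case_zero n IH a b hab h0.1 h0.2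
  by_cases hL : a ≠ Fin.last n ∧ b ≠ Fin.last n
  · exact swap_case_last n IH a b hab hL.1 hL.2
  -- now {a, b} = {0, last n}
  rcases n with _ | m
  · have ha := a.isLt
    have hb := b.isLt
    exact absurd (Fin.ext (by omega : (a : ℕ) = (b : ℕ))) hab
  have h0' : a = 0 ∨ b = 0 := by tauto
  have hL' : a = Fin.last (m + 1) ∨ b = Fin.last (m + 1) := by tauto
  have hlast0 : (Fin.last (m + 1)) ≠ 0 := by
    simp [Fin.ext_iff]
  have key : ∀ a b : Fin (m + 2), a = 0 → b = Fin.last (m + 1) →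
      rename ⇑(swap a b) (Dl k (m + 2))
        - (Equiv.Perm.sign (swap a b) : ℤ) • Dl k (m + 2) ∈ coinvIdeal k (m + 2) := by
    rintro a b rfl rfl
    rcases m with _ | m'
    · exact swap_two_case
    · -- m' + 3 ≥ 3 variables; use middle element 1
      have h1v : ((1 : Fin (m' + 3)) : ℕ) = 1 := rfl
      have hLv : ((Fin.last (m' + 2) : Fin (m' + 3)) : ℕ) = m' + 2 := rfl
      have hL1 : (Fin.last (m' + 2)) ≠ (1 : Fin (m' + 3)) := by
        simp [Fin.ext_iff]
      have hL0 : (Fin.last (m' + 2)) ≠ (0 : Fin (m' + 3)) := by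
        simp [Fin.ext_iff]
      have h10 : (1 : Fin (m' + 3)) ≠ 0 := by
        simp [Fin.ext_iff]
      have h1L : (1 : Fin (m' + 3)) ≠ Fin.last (m' + 2) := Ne.symm hL1
      have h0L : (0 : Fin (m' + 3)) ≠ Fin.last (m' + 2) := Ne.symm hL0
      have hdecomp : swap (0 : Fin (m' + 3)) (Fin.last (m' + 2))
          = swap 1 0 * swap (Fin.last (m' + 2)) 1 * swap 1 0 :=
        (Equiv.swap_mul_swap_mul_swap hL1 hL0).symm
      rw [hdecomp]
      have c1 := swap_case_last (m' + 2) IH 1 0 h10 h1L h0L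
      have c2 := swap_case_zero (m' + 2) IH (Fin.last (m' + 2)) 1 hL1 hL0 h10
      exact mul_case (mul_case c1 c2) c1
  rcases h0' with rfl | rfl
  · rcases hL' with h | rfl
    · exact absurd h.symm hlast0
    · exact key _ _ rfl rfl
  · rcases hL' with rfl | h
    · rw [swap_comm]; exact key _ _ rfl rfl
    · exact absurd h.symm hlast0

lemma one_case (n : ℕ) :
    rename ⇑(1 : Equiv.Perm (Fin n)) (Dl k n)
      - (Equiv.Perm.sign (1 : Equiv.Perm (Fin n)) : ℤ) • Dl k n ∈ coinvIdeal k n := by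
  have : rename ⇑(1 : Equiv.Perm (Fin n)) (Dl k n)
      - (Equiv.Perm.sign (1 : Equiv.Perm (Fin n)) : ℤ) • Dl k n = 0 := by
    simp [Equiv.Perm.coe_one, rename_id]
  rw [this]
  exact Ideal.zero_mem _

lemma main_lemma (n : ℕ) : ∀ σ : Equiv.Perm (Fin n),
    rename ⇑σ (Dl k n) - (Equiv.Perm.sign σ : ℤ) • Dl k n ∈ coinvIdeal k n := by
  induction n with
  | zero =>
    intro σ
    have hσ : σ = 1 := Subsingleton.elim σ 1
    rw [hσ]
    exact one_case 0
  | succ m IH =>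
    intro σ
    refine Equiv.Perm.swap_induction_on σ ?_ ?_
    · exact one_case (m + 1)
    · intro f x y hxy hf
      exact mul_case (swap_case m IH x y hxy) hf

/-- For every permutation `σ ∈ S_n`, acting on polynomials by permuting
the variables, `σ(Δ) - sgn(σ)·Δ` lies in the ideal generated by the elementary symmetric
polynomials, where `Δ = x_1^{n-1} x_2^{n-2} ⋯ x_{n-1}`: in the coinvariant algebra the
image of `Δ` transforms by the sign character. -/
theorem stmt15 {k : Type} [Field k] {n : ℕ} (hn : 0 < n) (σ : Equiv.Perm (Fin n)) :
    MvPolynomial.rename (⇑σ) (∏ i : Fin n, MvPolynomial.X i ^ (n - 1 - (i : ℕ))) -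
      ((Equiv.Perm.sign σ : ℤ) • ∏ i : Fin n, MvPolynomial.X i ^ (n - 1 - (i : ℕ)))
      ∈ coinvIdeal k n :=
  main_lemma n σ
end
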